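/- arXiv:2009.07609 — 6 statements merged into one kernel-verified Lean document; each statement's English description precedes it below -/
import Mathlib

section
/- Let N ≥ 17 be an integer, let a = (a₁, a₂) ∈ ℤ² \ {(0,0)} satisfy gcd(a₁, a₂, N) = 1, and let c be a real number with 3/4 ≤ c ≤ 1. Then the set of integer vectors S_a ∩ B_{N^c} contains at least N^{2c−1}/4 distinct elements, i.e. its cardinality, as a real number, is at least N^{2c−1}/4. -/
/-- `S_a = ℤ·a + N·ℤ² ⊆ ℤ²`. -/
def latticeSet (a : ℤ × ℤ) (N : ℕ) : Set (ℤ × ℤ) :=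
  {v | ∃ k : ℤ, ∃ w : ℤ × ℤ, v = (k * a.1 + N * w.1, k * a.2 + N * w.2)}

lemma ker_mem_lattice (a : ℤ × ℤ) (N : ℕ)
    (hgcd : Int.gcd (Int.gcd a.1 a.2) (N : ℤ) = 1)
    (x y : ℤ) (hd : (N : ℤ) ∣ (a.2 * x - a.1 * y)) : (x, y) ∈ latticeSet a N := by
  obtain ⟨d, hdd⟩ := hd
  have hco : IsCoprime ((Int.gcd a.1 a.2 : ℤ)) (N : ℤ) :=
    Int.isCoprime_iff_gcd_eq_one.mpr hgcd
  obtain ⟨s, t, hst⟩ := hco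
  have hg : (Int.gcd a.1 a.2 : ℤ) = a.1 * Int.gcdA a.1 a.2 + a.2 * Int.gcdB a.1 a.2 :=
    Int.gcd_eq_gcd_ab a.1 a.2
  set u : ℤ := s * Int.gcdA a.1 a.2 with hu
  set v : ℤ := s * Int.gcdB a.1 a.2 with hv
  have hone : u * a.1 + v * a.2 + t * N = 1 := by
    rw [hu, hv]; linear_combination hst - s * hg
  refine ⟨u * x + v * y, (v * d + t * x, -(u * d) + t * y), ?_⟩
  have h1 : x = (u * x + v * y) * a.1 + (N : ℤ) * (v * d + t * x) := by
    linear_combination v * hdd - x * hone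
  have h2 : y = (u * x + v * y) * a.2 + (N : ℤ) * (-(u * d) + t * y) := by
    linear_combination (-u) * hdd - y * hone
  exact Prod.ext h1 h2

set_option maxHeartbeats 1000000 in
theorem stmt5 (N : ℕ) (hN : 17 ≤ N) (a : ℤ × ℤ) (ha : a ≠ (0, 0))
    (hgcd : Int.gcd (Int.gcd a.1 a.2) (N : ℤ) = 1)
    (c : ℝ) (hc1 : 3 / 4 ≤ c) (hc2 : c ≤ 1) :
    (N : ℝ) ^ (2 * c - 1) / 4 ≤
      ({v : ℤ × ℤ | v ∈ latticeSet a N ∧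
        max (|v.1| : ℝ) (|v.2| : ℝ) ≤ (N : ℝ) ^ c}).ncard := by
  haveI : NeZero N := ⟨by omega⟩
  have hN0 : (0:ℝ) < N := by positivity
  have hN1 : (1:ℝ) ≤ N := by exact_mod_cast (by omega : 1 ≤ N)
  set M : ℕ := ⌊(N:ℝ)^c⌋₊ with hM
  have hpow0 : (0:ℝ) < (N:ℝ)^c := Real.rpow_pos_of_pos hN0 c
  have hM1 : (N:ℝ)^c < (M:ℝ) + 1 := Nat.lt_floor_add_one _
  have hMle : (M:ℝ) ≤ (N:ℝ)^c := Nat.floor_le hpow0.le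
  -- the source box
  set S : Finset (ℤ × ℤ) := Finset.Icc (0:ℤ) (M:ℤ) ×ˢ Finset.Icc (0:ℤ) (M:ℤ) with hSdef
  have hScard : S.card = (M+1) * (M+1) := by
    have hIcc : (Finset.Icc (0:ℤ) (M:ℤ)).card = M + 1 := by
      rw [Int.card_Icc]; omega
    rw [hSdef, Finset.card_product, hIcc]
  -- the coloring
  set f : ℤ × ℤ → ZMod N := fun v => ((a.2 * v.1 - a.1 * v.2 : ℤ) : ZMod N) with hf
  -- exponent facts
  have h2c : (N:ℝ)^(2*c) = ((N:ℝ)^c)^2 := by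
    rw [two_mul, Real.rpow_add hN0, sq]
  have hpow2 : (N:ℝ)^(2*c) ≤ ((M:ℝ)+1)^2 := by
    rw [h2c]
    nlinarith [hM1, hpow0.le]
  have hNle : (N:ℝ) ≤ (N:ℝ)^(2*c) := by
    calc (N:ℝ) = (N:ℝ)^(1:ℝ) := (Real.rpow_one _).symm
    _ ≤ (N:ℝ)^(2*c) := Real.rpow_le_rpow_of_exponent_le hN1 (by linarith)
  have hNleM : N ≤ (M+1)*(M+1) := by
    have h' : (N:ℝ) ≤ (((M+1)*(M+1) : ℕ) : ℝ) := by
      push_cast; nlinarith [le_trans hNle hpow2]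
    exact_mod_cast h'
  set n : ℕ := (M+1)*(M+1) / N with hn
  have hn1 : 1 ≤ n := (Nat.one_le_div_iff (by omega)).mpr hNleM
  -- pigeonhole
  obtain ⟨y, -, hfib⟩ := Finset.exists_le_card_fiber_of_mul_le_card_of_maps_to
    (f := f) (s := S) (t := (Finset.univ : Finset (ZMod N)))
    (fun v _ => Finset.mem_univ _) Finset.univ_nonempty
    (by rw [hScard, Finset.card_univ, ZMod.card, mul_comm]; exact Nat.div_mul_le_self _ _)
  set F : Finset (ℤ × ℤ) := {x ∈ S | f x = y} with hF
  have hFne : F.Nonempty := Finset.card_pos.mp (by omega)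
  obtain ⟨q, hq⟩ := hFne
  -- translate the fiber by q
  set E : Finset (ℤ × ℤ) := F.image (fun p => (p.1 - q.1, p.2 - q.2)) with hE
  have hinj : Function.Injective (fun p : ℤ × ℤ => (p.1 - q.1, p.2 - q.2)) := by
    intro p p' h
    simp only [Prod.mk.injEq] at h
    exact Prod.ext (by omega) (by omega)
  have hEcard : E.card = F.card := Finset.card_image_of_injective _ hinj
  set T : Set (ℤ × ℤ) := {v : ℤ × ℤ | v ∈ latticeSet a N ∧
        max (|v.1| : ℝ) (|v.2| : ℝ) ≤ (N : ℝ) ^ c} with hT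
  have memS : ∀ p ∈ S, 0 ≤ p.1 ∧ p.1 ≤ (M:ℤ) ∧ 0 ≤ p.2 ∧ p.2 ≤ (M:ℤ) := by
    intro p hp
    rw [hSdef, Finset.mem_product, Finset.mem_Icc, Finset.mem_Icc] at hp
    exact ⟨hp.1.1, hp.1.2, hp.2.1, hp.2.2⟩
  have hsub : (E : Set (ℤ × ℤ)) ⊆ T := by
    intro v hv
    simp only [hE, Finset.coe_image, Set.mem_image, Finset.mem_coe] at hv
    obtain ⟨p, hp, rfl⟩ := hv
    rw [hF, Finset.mem_filter] at hp hq
    obtain ⟨hpS, hpf⟩ := hp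
    obtain ⟨hqS, hqf⟩ := hq
    constructor
    · apply ker_mem_lattice a N hgcd
      have heq : ((a.2 * p.1 - a.1 * p.2 : ℤ) : ZMod N) = ((a.2 * q.1 - a.1 * q.2 : ℤ) : ZMod N) :=
        hpf.trans hqf.symm
      have hdvd : (N:ℤ) ∣ (a.2 * q.1 - a.1 * q.2) - (a.2 * p.1 - a.1 * p.2) :=
        Int.ModEq.dvd ((ZMod.intCast_eq_intCast_iff _ _ _).mp heq)
      have h3 : a.2 * (p.1 - q.1) - a.1 * (p.2 - q.2)
          = -((a.2 * q.1 - a.1 * q.2) - (a.2 * p.1 - a.1 * p.2)) := by ring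
      rw [h3]
      exact dvd_neg.mpr hdvd
    · obtain ⟨h1, h2, h3, h4⟩ := memS p hpS
      obtain ⟨g1, g2, g3, g4⟩ := memS q hqS
      have b1 : |p.1 - q.1| ≤ (M:ℤ) := abs_le.mpr ⟨by omega, by omega⟩
      have b2 : |p.2 - q.2| ≤ (M:ℤ) := abs_le.mpr ⟨by omega, by omega⟩
      have b1' : |((p.1 - q.1 : ℤ) : ℝ)| ≤ (N:ℝ)^c := by
        rw [← Int.cast_abs]; exact le_trans (by exact_mod_cast b1) hMle
      have b2' : |((p.2 - q.2 : ℤ) : ℝ)| ≤ (N:ℝ)^c := by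
        rw [← Int.cast_abs]; exact le_trans (by exact_mod_cast b2) hMle
      exact max_le b1' b2'
  have hTfin : T.Finite := by
    apply Set.Finite.subset (Set.finite_Icc ((-(M:ℤ), -(M:ℤ))) (((M:ℤ), (M:ℤ))))
    intro v hv
    obtain ⟨-, hbox⟩ := hv
    have h1 : |((v.1 : ℤ) : ℝ)| ≤ (N:ℝ)^c := le_trans (le_max_left _ _) hbox
    have h2 : |((v.2 : ℤ) : ℝ)| ≤ (N:ℝ)^c := le_trans (le_max_right _ _) hbox
    have h1'' : |v.1| ≤ (M:ℤ) := by
      have hx : |((v.1 : ℤ) : ℝ)| < ((M:ℕ):ℝ) + 1 := lt_of_le_of_lt h1 hM1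
      have hx2 : |v.1| < (M:ℤ) + 1 := by exact_mod_cast hx
      omega
    have h2'' : |v.2| ≤ (M:ℤ) := by
      have hx : |((v.2 : ℤ) : ℝ)| < ((M:ℕ):ℝ) + 1 := lt_of_le_of_lt h2 hM1
      have hx2 : |v.2| < (M:ℤ) + 1 := by exact_mod_cast hx
      omega
    rcases abs_le.mp h1'' with ⟨l1, r1⟩
    rcases abs_le.mp h2'' with ⟨l2, r2⟩
    simp only [Set.mem_Icc, Prod.le_def]
    exact ⟨⟨l1, l2⟩, ⟨r1, r2⟩⟩
  have hcount : (E.card : ℝ) ≤ (T.ncard : ℝ) := by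
    have := Set.ncard_le_ncard hsub hTfin
    rw [Set.ncard_coe_finset] at this
    exact_mod_cast this
  -- now the arithmetic
  have hnF : (n:ℝ) ≤ (E.card : ℝ) := by rw [hEcard]; exact_mod_cast hfib
  have hmod := Nat.div_add_mod ((M+1)*(M+1)) N
  have hr : (M+1)*(M+1) % N < N := Nat.mod_lt _ (by omega)
  have hnreal : (N:ℝ)^(2*c) - (N:ℝ) ≤ (N:ℝ) * (n:ℝ) := by
    have hcast : (N:ℝ) * (n:ℝ) + (((M+1)*(M+1) % N : ℕ) : ℝ) = (((M+1) * (M+1) : ℕ) : ℝ) := by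
      exact_mod_cast congrArg (Nat.cast : ℕ → ℝ) hmod
    have hrr : ((((M+1)*(M+1)) % N : ℕ) : ℝ) < (N:ℝ) := by exact_mod_cast hr
    have hmm : (((M+1)*(M+1) : ℕ) : ℝ) = ((M:ℝ)+1)^2 := by push_cast; ring
    nlinarith [hpow2]
  have hsplit : (N:ℝ)^(2*c-1) * (N:ℝ) = (N:ℝ)^(2*c) := by
    rw [← Real.rpow_add_one (by positivity) (2*c-1)]; ring_nf
  have hbig : (4:ℝ) ≤ (N:ℝ)^(2*c-1) := by
    have h12 : (N:ℝ)^((1:ℝ)/2) ≤ (N:ℝ)^(2*c-1) :=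
      Real.rpow_le_rpow_of_exponent_le hN1 (by linarith)
    have h16N : (16:ℝ) ≤ (N:ℝ) := by exact_mod_cast (by omega : 16 ≤ N)
    have h16 : (16:ℝ)^((1:ℝ)/2) ≤ (N:ℝ)^((1:ℝ)/2) :=
      Real.rpow_le_rpow (by norm_num) h16N (by norm_num)
    have h4 : (16:ℝ)^((1:ℝ)/2) = 4 := by
      rw [show (16:ℝ) = 4^(2:ℕ) by norm_num, ← Real.rpow_natCast (4:ℝ) 2,
        ← Real.rpow_mul (by norm_num)]
      norm_num
    linarith
  have hx : (N:ℝ)^(2*c-1) - 1 ≤ (n:ℝ) := by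
    have hmul : (N:ℝ) * ((N:ℝ)^(2*c-1) - 1) ≤ (N:ℝ) * (n:ℝ) := by
      nlinarith [hsplit, hnreal]
    exact le_of_mul_le_mul_left hmul hN0
  have hfinal : (N:ℝ)^(2*c-1)/4 ≤ (n:ℝ) := by linarith
  calc (N:ℝ)^(2*c-1)/4 ≤ (n:ℝ) := hfinal
    _ ≤ (E.card : ℝ) := hnF
    _ ≤ (T.ncard : ℝ) := hcount
end

section
/- There exists an absolute constant C₁ ≥ 1 with the following property. For every integer N ≥ 17, every a = (a₁, a₂) ∈ ℤ² with gcd(a₁, a₂, N) = 1, every real c with 3/4 ≤ c ≤ 1, and every real C ≥ 1, there exist integers k₁, k₂ and an integer e ≥ 1 such that gcd(k₁, k₂) = 1, the vector e·(k₁, k₂) lies in S_a ∩ B_{N^c}, and either e ≤ C₁·C²·N^{1−c} or max(|k₁|, |k₂|) > C. -/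
lemma mem_latticeSet_iff (a : ℤ × ℤ) (N : ℕ)
    (ha : Int.gcd (Int.gcd a.1 a.2) (N : ℤ) = 1) (x y : ℤ) :
    (x, y) ∈ latticeSet a N ↔ (N:ℤ) ∣ (a.2 * x - a.1 * y) := by
  constructor
  · rintro ⟨k, w, h⟩
    rw [Prod.ext_iff] at h
    obtain ⟨h1, h2⟩ := h
    simp only at h1 h2
    exact ⟨a.2 * w.1 - a.1 * w.2, by rw [h1, h2]; ring⟩
  · rintro ⟨m, hm⟩
    obtain ⟨p, q, hpq⟩ := Int.isCoprime_iff_gcd_eq_one.mpr ha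
    have hg : (Int.gcd a.1 a.2 : ℤ) = a.1 * Int.gcdA a.1 a.2 + a.2 * Int.gcdB a.1 a.2 :=
      Int.gcd_eq_gcd_ab a.1 a.2
    set s := Int.gcdA a.1 a.2
    set t := Int.gcdB a.1 a.2
    have h1' : p * (a.1 * s + a.2 * t) + q * (N:ℤ) = 1 := by rw [← hg]; exact hpq
    set k : ℤ := p * s * x + p * t * y with hk
    refine ⟨k, (p * t * m + q * x, -(p * s * m) + q * y), ?_⟩
    rw [Prod.ext_iff]
    constructor
    · simp only
      linear_combination (p*t)*hm - x*h1'
    · simp only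
      linear_combination -(p*s)*hm - y*h1'

set_option maxHeartbeats 1000000 in
theorem stmt6 :
    ∃ C₁ : ℝ, 1 ≤ C₁ ∧
      ∀ (N : ℕ), 17 ≤ N → ∀ a : ℤ × ℤ, Int.gcd (Int.gcd a.1 a.2) (N : ℤ) = 1 →
        ∀ c : ℝ, 3 / 4 ≤ c → c ≤ 1 → ∀ C : ℝ, 1 ≤ C →
          ∃ (k₁ k₂ e : ℤ), 1 ≤ e ∧ Int.gcd k₁ k₂ = 1 ∧
            (e * k₁, e * k₂) ∈ latticeSet a N ∧
            max (|(e * k₁ : ℤ)| : ℝ) (|(e * k₂ : ℤ)| : ℝ) ≤ (N : ℝ) ^ c ∧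
            ((e : ℝ) ≤ C₁ * C ^ 2 * (N : ℝ) ^ (1 - c) ∨
              C < max (|k₁| : ℝ) (|k₂| : ℝ)) := by
  refine ⟨1000, by norm_num, ?_⟩
  intro N hN a ha c hc1 hc2 C hC
  by_contra hcon
  push_neg at hcon
  haveI : NeZero N := ⟨by omega⟩
  have hNpos : (0:ℝ) < N := by positivity
  have hN1 : (1:ℝ) < N := by exact_mod_cast (by omega : 1 < N)
  set x : ℝ := (N:ℝ) ^ c with hxdef
  set E : ℝ := 1000 * C ^ 2 * (N:ℝ) ^ (1 - c) with hEdef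
  have hCpos : (0:ℝ) < C := lt_of_lt_of_le one_pos hC
  have hEpos : (0:ℝ) < E := by positivity
  have hE1 : (1:ℝ) ≤ E := by
    have h1 : (1:ℝ) ≤ (N:ℝ) ^ (1 - c) := Real.one_le_rpow hN1.le (by linarith)
    nlinarith
  have hxpos : (0:ℝ) < x := by positivity
  have hN17 : (17:ℝ) ≤ (N:ℝ) := by exact_mod_cast hN
  -- x ≥ 8
  have hx8 : (8:ℝ) ≤ x := by
    have h3 : (N:ℝ) ^ ((3:ℝ)/4) ≤ x := Real.rpow_le_rpow_of_exponent_le hN1.le (by linarith)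
    have hy : ((N:ℝ)^((3:ℝ)/4))^(4:ℕ) = (N:ℝ)^(3:ℕ) := by
      rw [← Real.rpow_natCast ((N:ℝ)^((3:ℝ)/4)) 4, ← Real.rpow_mul hNpos.le]
      norm_num
    have h5 : (8:ℝ)^(4:ℕ) ≤ ((N:ℝ)^((3:ℝ)/4))^(4:ℕ) := by
      rw [hy]
      calc (8:ℝ)^(4:ℕ) = 4096 := by norm_num
      _ ≤ (17:ℝ)^(3:ℕ) := by norm_num
      _ ≤ (N:ℝ)^(3:ℕ) := pow_le_pow_left₀ (by norm_num) hN17 3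
    have h6 : (8:ℝ) ≤ (N:ℝ)^((3:ℝ)/4) :=
      le_of_pow_le_pow_left₀ (by norm_num) (Real.rpow_nonneg hNpos.le _) h5
    linarith
  -- 4N ≤ x²
  have h4N : 4 * (N:ℝ) ≤ x ^ 2 := by
    have h1 : x ^ 2 = (N:ℝ) ^ (2*c) := by
      rw [hxdef, ← Real.rpow_natCast ((N:ℝ)^c) 2, ← Real.rpow_mul hNpos.le]
      ring_nf
    have h2 : (N:ℝ) ^ ((3:ℝ)/2) ≤ (N:ℝ) ^ (2*c) :=
      Real.rpow_le_rpow_of_exponent_le hN1.le (by linarith)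
    have h3 : 4 * (N:ℝ) ≤ (N:ℝ) ^ ((3:ℝ)/2) := by
      have he : (N:ℝ) ^ ((3:ℝ)/2) = (N:ℝ) * (N:ℝ) ^ ((1:ℝ)/2) := by
        rw [show (3:ℝ)/2 = 1 + 1/2 by norm_num, Real.rpow_add hNpos, Real.rpow_one]
      have h4 : (4:ℝ) ≤ (N:ℝ) ^ ((1:ℝ)/2) := by
        have hsq : ((N:ℝ)^((1:ℝ)/2))^(2:ℕ) = (N:ℝ) := by
          rw [← Real.rpow_natCast ((N:ℝ)^((1:ℝ)/2)) 2, ← Real.rpow_mul hNpos.le]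
          norm_num
        nlinarith [Real.rpow_nonneg hNpos.le ((1:ℝ)/2)]
      rw [he]; nlinarith
    linarith
  -- E * x = 1000 C² N
  have hEx : E * x = 1000 * C ^ 2 * (N:ℝ) := by
    rw [hEdef, hxdef]
    have hh : (N:ℝ) ^ (1 - c) * (N:ℝ) ^ c = (N:ℝ) := by
      rw [← Real.rpow_add hNpos]
      norm_num
    calc 1000 * C ^ 2 * (N:ℝ) ^ (1-c) * (N:ℝ)^c
        = 1000 * C^2 * ((N:ℝ)^(1-c) * (N:ℝ)^c) := by ring
    _ = 1000 * C^2 * (N:ℝ) := by rw [hh]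
  set R : ℕ := ⌊x⌋₊ with hRdef
  have hRx : (R:ℝ) ≤ x := Nat.floor_le hxpos.le
  have hxR : x - 1 ≤ (R:ℝ) := by
    have := Nat.lt_floor_add_one x
    linarith
  set P : Finset (ℤ × ℤ) :=
    ((Finset.Icc (-(R:ℤ)) (R:ℤ)) ×ˢ (Finset.Icc (-(R:ℤ)) (R:ℤ))).filter
      (fun v => v ≠ 0 ∧ (N:ℤ) ∣ (a.2 * v.1 - a.1 * v.2)) with hPdef
  have hPmem : ∀ v : ℤ × ℤ, v ∈ P ↔
      (|v.1| ≤ (R:ℤ) ∧ |v.2| ≤ (R:ℤ) ∧ v ≠ 0 ∧ (N:ℤ) ∣ (a.2 * v.1 - a.1 * v.2)) := by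
    intro v
    rw [hPdef, Finset.mem_filter, Finset.mem_product, Finset.mem_Icc, Finset.mem_Icc,
      abs_le, abs_le]
    tauto
  -- main property of points of P
  have hPmain : ∀ v ∈ P, E < (((Int.gcd v.1 v.2 : ℤ)):ℝ) ∧
      max (|((v.1 / (Int.gcd v.1 v.2 : ℤ) : ℤ) : ℝ)|) (|((v.2 / (Int.gcd v.1 v.2 : ℤ) : ℤ) : ℝ)|) ≤ C := by
    intro v hv
    rw [hPmem] at hv
    obtain ⟨hb1, hb2, hvne, hvdvd⟩ := hv
    have hgnat : 0 < Int.gcd v.1 v.2 := by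
      apply Int.gcd_pos_iff.mpr
      by_contra hc
      push_neg at hc
      exact hvne (Prod.ext hc.1 hc.2)
    set g : ℤ := (Int.gcd v.1 v.2 : ℤ) with hgdef
    have hgpos : 0 < g := Int.natCast_pos.mpr hgnat
    set k₁ : ℤ := v.1 / g with hk1def
    set k₂ : ℤ := v.2 / g with hk2def
    have he1 : g * k₁ = v.1 := Int.mul_ediv_cancel' (Int.gcd_dvd_left _ _)
    have he2 : g * k₂ = v.2 := Int.mul_ediv_cancel' (Int.gcd_dvd_right _ _)
    have hgcd1 : Int.gcd k₁ k₂ = 1 := Int.gcd_div_gcd_div_gcd hgnat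
    have hmem : ((g * k₁ : ℤ), (g * k₂ : ℤ)) ∈ latticeSet a N := by
      rw [mem_latticeSet_iff a N ha, he1, he2]
      exact hvdvd
    have hnorm : max (|((g * k₁ : ℤ) : ℝ)|) (|((g * k₂ : ℤ) : ℝ)|) ≤ x := by
      rw [he1, he2]
      have h1 : |((v.1 : ℤ) : ℝ)| ≤ x := by
        rw [← Int.cast_abs]
        exact le_trans (by exact_mod_cast hb1) hRx
      have h2 : |((v.2 : ℤ) : ℝ)| ≤ x := by
        rw [← Int.cast_abs]
        exact le_trans (by exact_mod_cast hb2) hRx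
      exact max_le h1 h2
    obtain ⟨hgt, hle⟩ := hcon k₁ k₂ g hgpos hgcd1 hmem hnorm
    exact ⟨hgt, hle⟩
  -- ================= upper bound =================
  have hCfloor1 : (1:ℤ) ≤ ⌊C⌋ := by
    rw [Int.le_floor]; exact_mod_cast hC
  set K : Finset (ℤ × ℤ) := (Finset.Icc (-⌊C⌋) ⌊C⌋) ×ˢ (Finset.Icc (-⌊C⌋) ⌊C⌋) with hKdef
  set f : (ℤ × ℤ) → (ℤ × ℤ) :=
    fun v => (v.1 / (Int.gcd v.1 v.2 : ℤ), v.2 / (Int.gcd v.1 v.2 : ℤ)) with hfdef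
  have hmaps : ∀ v ∈ P, f v ∈ K := by
    intro v hv
    obtain ⟨_, hle⟩ := hPmain v hv
    rw [hKdef, Finset.mem_product, Finset.mem_Icc, Finset.mem_Icc]
    have h1 : |(v.1 / (Int.gcd v.1 v.2 : ℤ))| ≤ ⌊C⌋ := by
      rw [Int.le_floor]
      push_cast
      exact le_trans (by exact_mod_cast le_max_left _ _) hle
    have h2 : |(v.2 / (Int.gcd v.1 v.2 : ℤ))| ≤ ⌊C⌋ := by
      rw [Int.le_floor]
      push_cast
      exact le_trans (by exact_mod_cast le_max_right _ _) hle
    rw [abs_le] at h1 h2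
    exact ⟨⟨h1.1, h1.2⟩, ⟨h2.1, h2.2⟩⟩
  set M : ℕ := ⌊(R:ℝ)/E⌋₊ with hMdef
  have hfib : ∀ k ∈ K, (P.filter (fun v => f v = k)).card ≤ M := by
    intro k hk
    have hgR : ∀ v ∈ P, f v = k → E < ((Int.gcd v.1 v.2 : ℤ):ℝ) ∧ ((Int.gcd v.1 v.2 : ℤ):ℝ) ≤ (R:ℝ) := by
      intro v hv hfv
      refine ⟨(hPmain v hv).1, ?_⟩
      rw [hPmem] at hv
      obtain ⟨hb1, hb2, hvne, _⟩ := hv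
      have hgnat : 0 < Int.gcd v.1 v.2 := by
        apply Int.gcd_pos_iff.mpr
        by_contra hc
        push_neg at hc
        exact hvne (Prod.ext hc.1 hc.2)
      have hgpos : (0:ℤ) < (Int.gcd v.1 v.2 : ℤ) := Int.natCast_pos.mpr hgnat
      have hd1 : (Int.gcd v.1 v.2 : ℤ) ∣ v.1 := (Int.gcd_dvd_left _ _)
      have hd2 : (Int.gcd v.1 v.2 : ℤ) ∣ v.2 := (Int.gcd_dvd_right _ _)
      have : (Int.gcd v.1 v.2 : ℤ) ≤ (R:ℤ) := by
        rcases (by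
          by_contra hc
          push_neg at hc
          exact hvne (Prod.ext hc.1 hc.2) : v.1 ≠ 0 ∨ v.2 ≠ 0) with h | h
        · calc (Int.gcd v.1 v.2 : ℤ) ≤ |v.1| := Int.le_of_dvd (abs_pos.mpr h) ((dvd_abs _ _).mpr hd1)
          _ ≤ (R:ℤ) := hb1
        · calc (Int.gcd v.1 v.2 : ℤ) ≤ |v.2| := Int.le_of_dvd (abs_pos.mpr h) ((dvd_abs _ _).mpr hd2)
          _ ≤ (R:ℤ) := hb2
      exact_mod_cast this
    -- monotone step
    have hstep : ∀ v ∈ P, ∀ w ∈ P, f v = k → f w = k →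
        (Int.gcd v.1 v.2 : ℤ) < (Int.gcd w.1 w.2 : ℤ) →
        ⌊((Int.gcd v.1 v.2 : ℤ):ℝ)/E⌋₊ < ⌊((Int.gcd w.1 w.2 : ℤ):ℝ)/E⌋₊ := by
      intro v hv w hw hfv hfw hlt
      set gv : ℤ := (Int.gcd v.1 v.2 : ℤ) with hgvdef
      set gw : ℤ := (Int.gcd w.1 w.2 : ℤ) with hgwdef
      have hv1 : gv * k.1 = v.1 := by
        rw [← hfv]; exact Int.mul_ediv_cancel' (Int.gcd_dvd_left _ _)
      have hv2 : gv * k.2 = v.2 := by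
        rw [← hfv]; exact Int.mul_ediv_cancel' (Int.gcd_dvd_right _ _)
      have hw1 : gw * k.1 = w.1 := by
        rw [← hfw]; exact Int.mul_ediv_cancel' (Int.gcd_dvd_left _ _)
      have hw2 : gw * k.2 = w.2 := by
        rw [← hfw]; exact Int.mul_ediv_cancel' (Int.gcd_dvd_right _ _)
      have hvmem := (hPmem v).mp hv
      have hwmem := (hPmem w).mp hw
      obtain ⟨hvb1, hvb2, hvne, hvdvd⟩ := hvmem
      obtain ⟨hwb1, hwb2, hwne, hwdvd⟩ := hwmem
      have hgvnat : 0 < Int.gcd v.1 v.2 := by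
        apply Int.gcd_pos_iff.mpr
        by_contra hc
        push_neg at hc
        exact hvne (Prod.ext hc.1 hc.2)
      have hgvpos : (0:ℤ) < gv := Int.natCast_pos.mpr hgvnat
      have hgwpos : (0:ℤ) < gw := lt_trans hgvpos hlt
      -- the difference point
      set d : ℤ × ℤ := (w.1 - v.1, w.2 - v.2) with hddef
      have hd1 : d.1 = (gw - gv) * k.1 := by simp only [hddef]; rw [← hv1, ← hw1]; ring
      have hd2 : d.2 = (gw - gv) * k.2 := by simp only [hddef]; rw [← hv2, ← hw2]; ring
      have hdP : d ∈ P := by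
        rw [hPmem]
        refine ⟨?_, ?_, ?_, ?_⟩
        · rw [hd1]
          rw [abs_mul, abs_of_nonneg (by omega : (0:ℤ) ≤ gw - gv)]
          calc (gw - gv) * |k.1| ≤ gw * |k.1| :=
                mul_le_mul_of_nonneg_right (by omega) (abs_nonneg _)
          _ = |gw * k.1| := by rw [abs_mul, abs_of_pos hgwpos]
          _ = |w.1| := by rw [hw1]
          _ ≤ (R:ℤ) := hwb1
        · rw [hd2]
          rw [abs_mul, abs_of_nonneg (by omega : (0:ℤ) ≤ gw - gv)]
          calc (gw - gv) * |k.2| ≤ gw * |k.2| :=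
                mul_le_mul_of_nonneg_right (by omega) (abs_nonneg _)
          _ = |gw * k.2| := by rw [abs_mul, abs_of_pos hgwpos]
          _ = |w.2| := by rw [hw2]
          _ ≤ (R:ℤ) := hwb2
        · have hwv : w ≠ v := by
            intro h
            exact absurd (by rw [hgvdef, hgwdef, h] : gv = gw) (ne_of_lt hlt)
          have hdwv : d = w - v := by
            rw [hddef, Prod.ext_iff]
            exact ⟨rfl, rfl⟩
          rw [hdwv]
          exact sub_ne_zero_of_ne hwv
        · have : a.2 * d.1 - a.1 * d.2 = (a.2 * w.1 - a.1 * w.2) - (a.2 * v.1 - a.1 * v.2) := by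
            simp only [hddef]; ring
          rw [this]
          exact dvd_sub hwdvd hvdvd
      -- gcd of d
      have hkgcd : Int.gcd k.1 k.2 = 1 := by
        rw [← hfv]
        exact Int.gcd_div_gcd_div_gcd hgvnat
      have hdgcd : (Int.gcd d.1 d.2 : ℤ) = gw - gv := by
        rw [hd1, hd2, Int.gcd_mul_left, hkgcd]
        simp only [mul_one]
        omega
      have hEd : E < ((gw - gv : ℤ):ℝ) := by
        have := (hPmain d hdP).1
        rwa [hdgcd] at this
      -- floor comparison
      have h1 : (⌊((gv:ℝ))/E⌋₊ : ℝ) ≤ (gv:ℝ)/E := Nat.floor_le (by positivity)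
      have h2 : ((gv:ℝ))/E + 1 < (gw:ℝ)/E := by
        have hlt : ((gv:ℝ)) + E < (gw:ℝ) := by
          push_cast at hEd
          linarith
        calc ((gv:ℝ))/E + 1 = ((gv:ℝ) + E)/E := by field_simp
        _ < (gw:ℝ)/E := by gcongr
      have h3 : (⌊((gv:ℝ))/E⌋₊ + 1 : ℕ) ≤ ⌊((gw:ℝ))/E⌋₊ := by
        rw [Nat.le_floor_iff (by positivity)]
        push_cast
        linarith
      omega
    -- injectivity into Icc 1 M
    have hcardIcc : (P.filter (fun v => f v = k)).card ≤ (Finset.Icc 1 M).card := by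
      apply Finset.card_le_card_of_injOn
        (fun v => ⌊((Int.gcd v.1 v.2 : ℤ):ℝ)/E⌋₊)
      · intro v hv
        rw [Finset.mem_coe, Finset.mem_filter] at hv
        obtain ⟨hvP, hfv⟩ := hv
        obtain ⟨hEg, hgRv⟩ := hgR v hvP hfv
        rw [Finset.mem_coe, Finset.mem_Icc]
        constructor
        · rw [Nat.le_floor_iff (by positivity)]
          push_cast at hEg ⊢
          rw [le_div_iff₀ hEpos]
          nlinarith
        · rw [hMdef]
          exact Nat.floor_mono (by gcongr)
      · intro v hv w hw hvw
        rw [Finset.mem_coe, Finset.mem_filter] at hv hw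
        obtain ⟨hvP, hfv⟩ := hv
        obtain ⟨hwP, hfw⟩ := hw
        by_contra hne
        rcases lt_trichotomy ((Int.gcd v.1 v.2 : ℤ)) ((Int.gcd w.1 w.2 : ℤ)) with h | h | h
        · exact absurd hvw (ne_of_lt (hstep v hvP w hwP hfv hfw h))
        · apply hne
          have hv1 : (Int.gcd v.1 v.2 : ℤ) * (f v).1 = v.1 := by
            simp only [hfdef]
            exact Int.mul_ediv_cancel' (Int.gcd_dvd_left _ _)
          have hv2 : (Int.gcd v.1 v.2 : ℤ) * (f v).2 = v.2 := by
            simp only [hfdef]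
            exact Int.mul_ediv_cancel' (Int.gcd_dvd_right _ _)
          have hw1 : (Int.gcd w.1 w.2 : ℤ) * (f w).1 = w.1 := by
            simp only [hfdef]
            exact Int.mul_ediv_cancel' (Int.gcd_dvd_left _ _)
          have hw2 : (Int.gcd w.1 w.2 : ℤ) * (f w).2 = w.2 := by
            simp only [hfdef]
            exact Int.mul_ediv_cancel' (Int.gcd_dvd_right _ _)
          apply Prod.ext
          · rw [← hv1, ← hw1, hfv, hfw, h]
          · rw [← hv2, ← hw2, hfv, hfw, h]
        · exact absurd hvw.symm (ne_of_lt (hstep w hwP v hvP hfw hfv h))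
    calc (P.filter (fun v => f v = k)).card ≤ (Finset.Icc 1 M).card := hcardIcc
    _ = M := by rw [Nat.card_Icc]; omega
  have hupper : (P.card : ℝ) ≤ 9 * C^2 * ((R:ℝ) / E) := by
    have hsum : P.card = ∑ k ∈ K, (P.filter (fun v => f v = k)).card :=
      Finset.card_eq_sum_card_fiberwise hmaps
    have h1 : P.card ≤ K.card * M := by
      rw [hsum]
      calc ∑ k ∈ K, (P.filter (fun v => f v = k)).card ≤ ∑ _k ∈ K, M :=
        Finset.sum_le_sum hfib
      _ = K.card * M := by rw [Finset.sum_const, smul_eq_mul]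
    have hCf : (((2*⌊C⌋+1).toNat : ℕ) : ℝ) ≤ 3*C := by
      have ha1 : ((2*⌊C⌋+1).toNat : ℤ) = 2*⌊C⌋+1 := Int.toNat_of_nonneg (by omega)
      have ha2 : ((⌊C⌋:ℤ):ℝ) ≤ C := Int.floor_le C
      have ha3 : (((2*⌊C⌋+1).toNat : ℕ) : ℝ) = 2*((⌊C⌋:ℤ):ℝ)+1 := by
        exact_mod_cast congrArg (fun z : ℤ => (z : ℝ)) ha1
      rw [ha3]; linarith
    have hKcard : (K.card : ℝ) ≤ 9 * C^2 := by
      have hk1 : K.card = ((2*⌊C⌋+1).toNat) * ((2*⌊C⌋+1).toNat) := by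
        rw [hKdef, Finset.card_product, Int.card_Icc]
        congr 1 <;> omega
      rw [hk1]
      have hk2 : ((((2*⌊C⌋+1).toNat) * ((2*⌊C⌋+1).toNat) : ℕ) : ℝ)
          = (((2*⌊C⌋+1).toNat : ℕ):ℝ) * (((2*⌊C⌋+1).toNat : ℕ):ℝ) := by push_cast; ring
      rw [hk2]
      have hy : (0:ℝ) ≤ (((2*⌊C⌋+1).toNat : ℕ):ℝ) := Nat.cast_nonneg _
      calc (((2*⌊C⌋+1).toNat : ℕ):ℝ) * (((2*⌊C⌋+1).toNat : ℕ):ℝ) ≤ (3*C)*(3*C) :=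
        mul_le_mul hCf hCf hy (by linarith)
      _ = 9*C^2 := by ring
    have hM : (M:ℝ) ≤ (R:ℝ)/E := by
      rw [hMdef]
      exact Nat.floor_le (by positivity)
    calc (P.card : ℝ) ≤ (K.card : ℝ) * (M:ℝ) := by exact_mod_cast h1
    _ ≤ (9*C^2) * ((R:ℝ)/E) :=
      mul_le_mul hKcard hM (Nat.cast_nonneg M) (by positivity)
  -- ================= lower bound =================
  set r : ℕ := R/2 with hrdef
  set Q : Finset (ℤ × ℤ) := (Finset.Icc (-(r:ℤ)) (r:ℤ)) ×ˢ (Finset.Icc (-(r:ℤ)) (r:ℤ)) with hQdef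
  have hQcard : Q.card = (2*r+1) * (2*r+1) := by
    rw [hQdef, Finset.card_product, Int.card_Icc]
    have hh : ((r:ℤ) + 1 - -(r:ℤ)).toNat = 2*r+1 := by omega
    rw [hh]
  set ψ : ℤ × ℤ → ZMod N := fun v => ((a.2 * v.1 - a.1 * v.2 : ℤ) : ZMod N) with hψdef
  set n : ℕ := ((2*r+1)*(2*r+1))/N with hndef
  have hpig : ∃ t : ZMod N, n ≤ (Q.filter (fun v => ψ v = t)).card := by
    have hle : (Finset.univ : Finset (ZMod N)).card * n ≤ Q.card := by
      rw [Finset.card_univ, ZMod.card, hQcard, hndef]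
      calc N * ((2*r+1)*(2*r+1)/N) = ((2*r+1)*(2*r+1)/N) * N := mul_comm _ _
      _ ≤ (2*r+1)*(2*r+1) := Nat.div_mul_le_self _ _
    obtain ⟨t, _, ht⟩ := Finset.exists_le_card_fiber_of_mul_le_card_of_maps_to
      (f := ψ) (fun v _ => Finset.mem_univ _) Finset.univ_nonempty hle
    exact ⟨t, ht⟩
  obtain ⟨t0, hF⟩ := hpig
  set F : Finset (ℤ × ℤ) := Q.filter (fun v => ψ v = t0) with hFdef
  have hrR : R ≤ 2*r+1 := by omega
  have h2rR : 2*r ≤ R := by omega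
  have h2r1 : x - 1 ≤ ((2*r+1 : ℕ):ℝ) := by
    have hh : (R:ℝ) ≤ ((2*r+1:ℕ):ℝ) := by exact_mod_cast hrR
    linarith
  have hnpos : 1 ≤ n := by
    rw [hndef]
    apply (Nat.one_le_div_iff (by omega : 0 < N)).mpr
    have hreal : (N:ℝ) ≤ ((2*r+1:ℕ):ℝ) * ((2*r+1:ℕ):ℝ) := by
      nlinarith [hx8, h4N, h2r1]
    exact_mod_cast hreal
  have hFne : F.Nonempty := Finset.card_pos.mp (lt_of_lt_of_le hnpos hF)
  obtain ⟨v₀, hv₀⟩ := hFne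
  have hQmem : ∀ v : ℤ × ℤ, v ∈ Q ↔ (|v.1| ≤ (r:ℤ) ∧ |v.2| ≤ (r:ℤ)) := by
    intro v
    rw [hQdef, Finset.mem_product, Finset.mem_Icc, Finset.mem_Icc, abs_le, abs_le]
  have hFmem : ∀ v ∈ F, v ∈ Q ∧ ψ v = t0 := by
    intro v hv
    rw [hFdef, Finset.mem_filter] at hv
    exact hv
  have hinj : (F.erase v₀).card ≤ P.card := by
    apply Finset.card_le_card_of_injOn (fun v => (v.1 - v₀.1, v.2 - v₀.2))
    · intro v hv
      rw [Finset.mem_coe, Finset.mem_erase] at hv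
      obtain ⟨hvne, hvF⟩ := hv
      obtain ⟨hvQ, hvψ⟩ := hFmem v hvF
      obtain ⟨h0Q, h0ψ⟩ := hFmem v₀ hv₀
      rw [hQmem] at hvQ h0Q
      rw [Finset.mem_coe, hPmem]
      have h2rRz : (2*(r:ℤ)) ≤ (R:ℤ) := by exact_mod_cast h2rR
      refine ⟨?_, ?_, ?_, ?_⟩
      · simp only
        have := hvQ.1; have := h0Q.1
        rw [abs_le] at *
        constructor <;> omega
      · simp only
        have := hvQ.2; have := h0Q.2
        rw [abs_le] at *
        constructor <;> omega
      · intro h0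
        rw [Prod.ext_iff] at h0
        simp only [Prod.fst_zero, Prod.snd_zero] at h0
        exact hvne (Prod.ext (by omega) (by omega))
      · have hcast : ((a.2 * v.1 - a.1 * v.2 : ℤ) : ZMod N) = ((a.2 * v₀.1 - a.1 * v₀.2 : ℤ) : ZMod N) := by
          have : ψ v = ψ v₀ := by rw [hvψ, h0ψ]
          simpa [hψdef] using this
        have hmodeq := (ZMod.intCast_eq_intCast_iff _ _ _).mp hcast
        have hdvd := Int.ModEq.dvd hmodeq
        simp only
        rw [show a.2 * (v.1 - v₀.1) - a.1 * (v.2 - v₀.2)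
            = -((a.2 * v₀.1 - a.1 * v₀.2) - (a.2 * v.1 - a.1 * v.2)) by ring]
        exact dvd_neg.mpr hdvd
    · intro u hu w hw huw
      rw [Prod.ext_iff] at huw
      simp only at huw
      apply Prod.ext (by omega : u.1 = w.1) (by omega : u.2 = w.2)
  have hcard2 : n ≤ P.card + 1 := by
    have he := Finset.card_erase_of_mem hv₀
    omega
  -- q < N (n+1)
  have hdm := Nat.div_add_mod ((2*r+1)*(2*r+1)) N
  have hml : ((2*r+1)*(2*r+1)) % N < N := Nat.mod_lt _ (by omega)
  have hqlt : (((2*r+1)*(2*r+1) : ℕ):ℝ) < (N:ℝ) * ((n:ℝ)+1) := by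
    have h1 : (N:ℝ) * (n:ℝ) + ((((2*r+1)*(2*r+1)) % N : ℕ) : ℝ) = (((2*r+1)*(2*r+1):ℕ):ℝ) := by
      exact_mod_cast hdm
    have h2 : ((((2*r+1)*(2*r+1)) % N : ℕ) : ℝ) < (N:ℝ) := by exact_mod_cast hml
    nlinarith
  have hfin1 : (x-1)^2 < (N:ℝ)*((P.card:ℝ)+2) := by
    calc (x-1)^2 ≤ ((2*r+1:ℕ):ℝ) * ((2*r+1:ℕ):ℝ) := by nlinarith [h2r1, hx8]
    _ < (N:ℝ)*((n:ℝ)+1) := by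
        calc ((2*r+1:ℕ):ℝ) * ((2*r+1:ℕ):ℝ) = (((2*r+1)*(2*r+1):ℕ):ℝ) := by push_cast; ring
        _ < (N:ℝ)*((n:ℝ)+1) := hqlt
    _ ≤ (N:ℝ)*((P.card:ℝ)+2) := by
        have hh : (n:ℝ) ≤ (P.card:ℝ)+1 := by exact_mod_cast hcard2
        nlinarith
  have hPreal : (P.card:ℝ) ≤ 9 * x^2 / (1000 * (N:ℝ)) := by
    have h1 : (R:ℝ)/E ≤ x/E := by gcongr
    have h2 : x/E = x*x/(1000*C^2*(N:ℝ)) := by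
      rw [← hEx]
      rw [div_eq_div_iff (ne_of_gt hEpos) (by positivity : (0:ℝ) < E*x).ne']
      ring
    calc (P.card:ℝ) ≤ 9*C^2*((R:ℝ)/E) := hupper
    _ ≤ 9*C^2*(x/E) := by gcongr
    _ = 9*C^2*(x*x/(1000*C^2*(N:ℝ))) := by rw [h2]
    _ = 9*x^2/(1000*(N:ℝ)) := by field_simp
  have hstep2 : (N:ℝ)*((P.card:ℝ)+2) ≤ 9*x^2/1000 + 2*(N:ℝ) := by
    have h3 : (N:ℝ)*(P.card:ℝ) ≤ (N:ℝ)*(9*x^2/(1000*(N:ℝ))) :=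
      mul_le_mul_of_nonneg_left hPreal hNpos.le
    have h4 : (N:ℝ)*(9*x^2/(1000*(N:ℝ))) = 9*x^2/1000 := by
      field_simp
    nlinarith
  nlinarith [hfin1, hstep2, h4N, hx8,
    mul_le_mul_of_nonneg_left hx8 (by linarith : (0:ℝ) ≤ x)]
end

section
/- Let P ∈ ℂ[X,Y] be an irreducible polynomial of positive degree in X and of positive degree in Y, and let C = {(x,y) ∈ ℂ² : P(x,y) = 0}. Let U₁, U₂ ⊆ ℂ be bounded, open and connected. Assume C ∩ (U₁ × U₂) ≠ ∅ and C ∩ ((∂U₁ × U₂) ∪ (U₁ × ∂U₂)) = ∅, where ∂ denotes the topological boundary. Then: (i) for every u in the closure of U₁ there exists v in the closure of U₂ with (u,v) ∈ C; (ii) for every v in the closure of U₂ there exists u in the closure of U₁ with (u,v) ∈ C; (iii) every point (u,v) ∈ C with u in the closure of U₁ and v in the closure of U₂ satisfies: u ∈ ∂U₁ if and only if v ∈ ∂U₂. -/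
open MvPolynomial Metric Set Bornology Filter

noncomputable def iotaAux : MvPolynomial (Fin 1) ℂ ≃ₐ[ℂ] Polynomial ℂ :=
  (MvPolynomial.finSuccEquiv ℂ 0).trans
    (Polynomial.mapAlgEquiv (MvPolynomial.isEmptyAlgEquiv ℂ (Fin 0)))

lemma iotaAux_C (r : ℂ) : iotaAux (MvPolynomial.C r) = Polynomial.C r := by
  have h := iotaAux.commutes r
  simpa [MvPolynomial.algebraMap_eq, Polynomial.algebraMap_eq] using h

lemma iotaAux_X : iotaAux (MvPolynomial.X (0 : Fin 1)) = Polynomial.X := by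
  simp [iotaAux, AlgEquiv.trans_apply, MvPolynomial.finSuccEquiv_X_zero,
    Polynomial.coe_mapAlgEquiv, Polynomial.map_X]

lemma iotaAux_eval (u : ℂ) (g : MvPolynomial (Fin 1) ℂ) :
    (iotaAux g).eval u = MvPolynomial.eval (fun _ => u) g := by
  induction g using MvPolynomial.induction_on with
  | C r => simp [iotaAux_C]
  | add p q hp hq => simp [map_add, hp, hq]
  | mul_X p i hp =>
    have hi : i = 0 := Subsingleton.elim i 0
    subst hi
    simp [map_mul, iotaAux_X, hp]

set_option maxHeartbeats 1000000 in
lemma curve_proj_open (P : MvPolynomial (Fin 2) ℂ) (hP : Irreducible P)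
    (hdY : 0 < P.degreeOf 1) (V : Set ℂ) (hVo : IsOpen V) :
    IsOpen {u : ℂ | ∃ v ∈ V, MvPolynomial.eval ![u, v] P = 0} := by
  classical
  set Psw := MvPolynomial.rename (Equiv.swap (0 : Fin 2) 1) P with hPswdef
  set F := MvPolynomial.finSuccEquiv ℂ 1 Psw with hFdef
  set G := F.map (iotaAux.toAlgHom.toRingHom) with hGdef
  have hswap : ∀ u v : ℂ, MvPolynomial.eval ![u, v] P = MvPolynomial.eval ![v, u] Psw := by
    intro u v
    rw [hPswdef, MvPolynomial.eval_rename]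
    have hc : (![v, u] ∘ ⇑(Equiv.swap (0 : Fin 2) 1)) = ![u, v] := by
      funext i; fin_cases i <;> simp
    rw [hc]
  have hcons : ∀ u v : ℂ, (![v, u] : Fin 2 → ℂ) = Fin.cons v (fun _ => u) := by
    intro u v; funext i; fin_cases i <;> rfl
  have heval : ∀ u v : ℂ, MvPolynomial.eval ![u, v] P
      = Polynomial.eval v (F.map (MvPolynomial.eval (fun _ => u))) := by
    intro u v
    rw [hswap, hcons, MvPolynomial.eval_eq_eval_mv_eval']
  have hGF : ∀ u : ℂ, F.map (MvPolynomial.eval (fun _ => u))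
      = G.map (Polynomial.evalRingHom u) := by
    intro u
    ext j
    simp only [hGdef, Polynomial.coeff_map, Polynomial.coe_evalRingHom]
    exact (iotaAux_eval u (F.coeff j)).symm
  have hGdeg : G.natDegree = P.degreeOf 1 := by
    have h1 : Function.Injective (iotaAux.toAlgHom.toRingHom :
        MvPolynomial (Fin 1) ℂ →+* Polynomial ℂ) := fun a b h => iotaAux.injective h
    rw [hGdef, Polynomial.natDegree_map_eq_of_injective h1, hFdef,
      MvPolynomial.natDegree_finSuccEquiv, hPswdef]
    have h2 := MvPolynomial.degreeOf_rename_of_injective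
      (Equiv.injective (Equiv.swap (0 : Fin 2) 1)) (p := P) (1 : Fin 2)
    simpa using h2
  have hGirr : Irreducible G := by
    have h1 : Irreducible Psw := by
      rw [hPswdef,
        show MvPolynomial.rename (Equiv.swap (0 : Fin 2) 1) P
          = MvPolynomial.renameEquiv ℂ (Equiv.swap (0 : Fin 2) 1) P from rfl]
      exact (MulEquiv.irreducible_iff _).mpr hP
    have h2 : Irreducible F := by
      rw [hFdef]; exact (MulEquiv.irreducible_iff (MvPolynomial.finSuccEquiv ℂ 1)).mpr h1
    have h3 : G = Polynomial.mapAlgEquiv iotaAux F := rfl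
    rw [h3]; exact (MulEquiv.irreducible_iff (Polynomial.mapAlgEquiv iotaAux)).mpr h2
  have hQne : ∀ u : ℂ, G.map (Polynomial.evalRingHom u) ≠ 0 := by
    intro u h0
    have hdvd : Polynomial.C (Polynomial.X - Polynomial.C u) ∣ G := by
      rw [Polynomial.C_dvd_iff_dvd_coeff]
      intro j
      have hc : (G.coeff j).eval u = 0 := by
        have h1 := congrArg (fun q => Polynomial.coeff q j) h0
        simpa [Polynomial.coeff_map] using h1
      exact Polynomial.dvd_iff_isRoot.mpr hc
    obtain ⟨w, hw⟩ := hdvd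
    rcases hGirr.isUnit_or_isUnit hw with h | h
    · exact Polynomial.not_isUnit_X_sub_C u (Polynomial.isUnit_C.mp h)
    · have hw0 : w ≠ 0 := h.ne_zero
      have hC0 : (Polynomial.C (Polynomial.X - Polynomial.C u) : Polynomial (Polynomial ℂ)) ≠ 0 :=
        Polynomial.C_ne_zero.mpr (Polynomial.X_sub_C_ne_zero u)
      have hnd : G.natDegree = 0 := by
        rw [hw, Polynomial.natDegree_mul hC0 hw0, Polynomial.natDegree_C,
          Polynomial.natDegree_eq_zero_of_isUnit h]
      omega
  -- openness
  rw [isOpen_iff_mem_nhds]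
  rintro u₀ ⟨v₀, hv₀V, hroot⟩
  have hQeval : ∀ u v : ℂ, (G.map (Polynomial.evalRingHom u)).eval v
      = MvPolynomial.eval ![u, v] P := by
    intro u v; rw [heval, hGF]
  have hf : Continuous fun p : ℂ × ℂ => MvPolynomial.eval ![p.1, p.2] P := by
    apply (MvPolynomial.continuous_eval P).comp
    apply continuous_pi
    intro i
    fin_cases i
    · simpa using continuous_fst
    · simpa using continuous_snd
  -- radius
  have hZfin : {z : ℂ | MvPolynomial.eval ![u₀, z] P = 0}.Finite := by
    have h1 : {z : ℂ | MvPolynomial.eval ![u₀, z] P = 0}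
        = {z : ℂ | (G.map (Polynomial.evalRingHom u₀)).IsRoot z} := by
      ext z; simp [Polynomial.IsRoot, hQeval]
    rw [h1]
    exact Polynomial.finite_setOf_isRoot (hQne u₀)
  have hclosed : IsClosed ({z : ℂ | MvPolynomial.eval ![u₀, z] P = 0} \ {v₀}) :=
    hZfin.diff.isClosed
  have hv₀mem : v₀ ∈ ({z : ℂ | MvPolynomial.eval ![u₀, z] P = 0} \ {v₀})ᶜ := fun h => h.2 rfl
  obtain ⟨r₁, hr₁pos, hr₁⟩ := (Metric.isOpen_iff.mp hclosed.isOpen_compl) v₀ hv₀mem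
  obtain ⟨r₂, hr₂pos, hr₂⟩ := (Metric.isOpen_iff.mp hVo) v₀ hv₀V
  set r := min r₁ r₂ / 2 with hrdef
  have hminpos : 0 < min r₁ r₂ := lt_min hr₁pos hr₂pos
  have hrpos : 0 < r := by rw [hrdef]; linarith
  have hball : Metric.closedBall v₀ r ⊆ Metric.ball v₀ (min r₁ r₂) :=
    Metric.closedBall_subset_ball (by rw [hrdef]; linarith)
  have hballV : Metric.closedBall v₀ r ⊆ V := fun z hz =>
    hr₂ (Metric.ball_subset_ball (min_le_right r₁ r₂) (hball hz))
  have hballZ : ∀ z ∈ Metric.closedBall v₀ r, z ≠ v₀ → MvPolynomial.eval ![u₀, z] P ≠ 0 := by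
    intro z hz hzne h0
    exact (hr₁ (Metric.ball_subset_ball (min_le_left r₁ r₂) (hball hz))) ⟨h0, hzne⟩
  -- minimum on sphere
  have hsphne : (Metric.sphere v₀ r).Nonempty := NormedSpace.sphere_nonempty.mpr hrpos.le
  obtain ⟨z₀, hz₀, hz₀min⟩ := (isCompact_sphere v₀ r).exists_isMinOn (f := fun z => ‖MvPolynomial.eval ![u₀, z] P‖) hsphne
    ((hf.comp (continuous_const.prodMk continuous_id)).norm.continuousOn)
  set δ := ‖MvPolynomial.eval ![u₀, z₀] P‖ with hδdef
  have hδpos : 0 < δ := by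
    rw [hδdef, norm_pos_iff]
    apply hballZ z₀ (Metric.sphere_subset_closedBall hz₀)
    intro h
    rw [h] at hz₀
    simp only [Metric.mem_sphere, dist_self] at hz₀
    exact hrpos.ne' hz₀.symm
  -- eventually statements
  have hev1 : ∀ᶠ u in nhds u₀, ∀ z ∈ Metric.sphere v₀ r,
      ‖MvPolynomial.eval ![u, z] P - MvPolynomial.eval ![u₀, z] P‖ < δ / 2 := by
    apply (isCompact_sphere v₀ r).eventually_forall_of_forall_eventually
    intro z hz
    have hWopen : IsOpen {p : ℂ × ℂ |
        ‖MvPolynomial.eval ![p.1, p.2] P - MvPolynomial.eval ![u₀, p.2] P‖ < δ / 2} :=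
      isOpen_lt (hf.sub (hf.comp (continuous_const.prodMk continuous_snd))).norm
        continuous_const
    have hWmem : (u₀, z) ∈ {p : ℂ × ℂ |
        ‖MvPolynomial.eval ![p.1, p.2] P - MvPolynomial.eval ![u₀, p.2] P‖ < δ / 2} := by
      simpa using half_pos hδpos
    exact hWopen.eventually_mem hWmem
  have hev2 : ∀ᶠ u in nhds u₀, ‖MvPolynomial.eval ![u, v₀] P‖ < δ / 2 := by
    have hWopen : IsOpen {u : ℂ | ‖MvPolynomial.eval ![u, v₀] P‖ < δ / 2} :=
      isOpen_lt (hf.comp (continuous_id.prodMk continuous_const)).norm continuous_const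
    have hWmem : u₀ ∈ {u : ℂ | ‖MvPolynomial.eval ![u, v₀] P‖ < δ / 2} := by
      simp only [Set.mem_setOf_eq, hroot, norm_zero]
      exact half_pos hδpos
    exact hWopen.eventually_mem hWmem
  filter_upwards [hev1, hev2] with u h1 h2
  show ∃ v ∈ V, MvPolynomial.eval ![u, v] P = 0
  by_contra hno
  push_neg at hno
  have hne0 : ∀ z ∈ Metric.closedBall v₀ r, MvPolynomial.eval ![u, z] P ≠ 0 := fun z hz =>
    hno z (hballV hz)
  set g : ℂ → ℂ := fun z => (MvPolynomial.eval ![u, z] P)⁻¹ with hgdef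
  have hpolyeq : (fun z => MvPolynomial.eval ![u, z] P)
      = fun z => (G.map (Polynomial.evalRingHom u)).eval z := by funext z; exact (hQeval u z).symm
  have hgd : DifferentiableOn ℂ g (Metric.closedBall v₀ r) := by
    apply DifferentiableOn.inv
    · rw [hpolyeq]
      exact (G.map (Polynomial.evalRingHom u)).differentiable.differentiableOn
    · exact hne0
  have hdc : DiffContOnCl ℂ g (Metric.ball v₀ r) :=
    DifferentiableOn.diffContOnCl (by rwa [closure_ball v₀ hrpos.ne'])
  have hfr : ∀ z ∈ frontier (Metric.ball v₀ r), ‖g z‖ ≤ (δ / 2)⁻¹ := by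
    intro z hz
    rw [frontier_ball v₀ hrpos.ne'] at hz
    have h3 := h1 z hz
    have h4 : δ ≤ ‖MvPolynomial.eval ![u₀, z] P‖ := hz₀min hz
    have h5 : ‖MvPolynomial.eval ![u₀, z] P‖ - ‖MvPolynomial.eval ![u, z] P‖
        ≤ ‖MvPolynomial.eval ![u₀, z] P - MvPolynomial.eval ![u, z] P‖ :=
      norm_sub_norm_le _ _
    have h6 : ‖MvPolynomial.eval ![u₀, z] P - MvPolynomial.eval ![u, z] P‖
        = ‖MvPolynomial.eval ![u, z] P - MvPolynomial.eval ![u₀, z] P‖ := norm_sub_rev _ _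
    have h7 : δ / 2 ≤ ‖MvPolynomial.eval ![u, z] P‖ := by linarith
    rw [hgdef]
    simp only [norm_inv]
    rw [inv_le_inv₀ (lt_of_lt_of_le (half_pos hδpos) h7) (half_pos hδpos)]
    exact h7
  have hmax := Complex.norm_le_of_forall_mem_frontier_norm_le Metric.isBounded_ball hdc hfr
    (subset_closure (Metric.mem_ball_self hrpos))
  have h7 : MvPolynomial.eval ![u, v₀] P ≠ 0 := hne0 v₀ (Metric.mem_closedBall_self hrpos.le)
  have h8 : 0 < ‖MvPolynomial.eval ![u, v₀] P‖ := norm_pos_iff.mpr h7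
  have h9 : ‖g v₀‖ = ‖MvPolynomial.eval ![u, v₀] P‖⁻¹ := by rw [hgdef]; simp [norm_inv]
  rw [h9] at hmax
  have h10 : (δ / 2)⁻¹ < ‖MvPolynomial.eval ![u, v₀] P‖⁻¹ :=
    (inv_lt_inv₀ (half_pos hδpos) h8).mpr h2
  linarith

lemma fill_aux (f : ℂ × ℂ → ℂ) (hf : Continuous f)
    (U₁ U₂ : Set ℂ) (hU₂b : Bornology.IsBounded U₂) (hU₁c : IsConnected U₁)
    (hAopen : IsOpen {u : ℂ | ∃ v ∈ U₂, f (u, v) = 0})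
    (hne : ∃ p : ℂ × ℂ, f p = 0 ∧ p.1 ∈ U₁ ∧ p.2 ∈ U₂)
    (hbd : ∀ u ∈ U₁, ∀ v ∈ frontier U₂, f (u, v) ≠ 0) :
    ∀ u ∈ closure U₁, ∃ v ∈ closure U₂, f (u, v) = 0 := by
  have hK : IsCompact (closure U₂) :=
    Metric.isCompact_of_isClosed_isBounded isClosed_closure hU₂b.closure
  set A : Set ℂ := {u : ℂ | ∃ v ∈ U₂, f (u, v) = 0} with hA
  set B : Set ℂ := {u : ℂ | ∀ v ∈ closure U₂, f (u, v) ≠ 0} with hB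
  have hBopen : IsOpen B := by
    rw [isOpen_iff_mem_nhds]
    intro u₀ hu₀
    have hev : ∀ᶠ u in nhds u₀, ∀ v ∈ closure U₂, f (u, v) ≠ 0 := by
      apply hK.eventually_forall_of_forall_eventually
      intro v hv
      have hWopen : IsOpen {p : ℂ × ℂ | f p ≠ 0} :=
        isOpen_compl_singleton.preimage hf
      exact hWopen.eventually_mem (hu₀ v hv)
    exact hev
  have hsub : U₁ ⊆ A ∪ B := by
    intro u hu
    by_cases h : ∃ v ∈ closure U₂, f (u, v) = 0
    · obtain ⟨v, hv, hfv⟩ := h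
      rw [closure_eq_self_union_frontier] at hv
      rcases hv with hv | hv
      · exact Or.inl ⟨v, hv, hfv⟩
      · exact absurd hfv (hbd u hu v hv)
    · right
      intro v hv hfv
      exact h ⟨v, hv, hfv⟩
  have hU1A : U₁ ⊆ A := by
    by_contra hcon
    obtain ⟨p, hp0, hp1, hp2⟩ := hne
    have hAne : (U₁ ∩ A).Nonempty := ⟨p.1, hp1, p.2, hp2, hp0⟩
    obtain ⟨u, hu, hnotA⟩ := Set.not_subset.mp hcon
    have hBne : (U₁ ∩ B).Nonempty := ⟨u, hu, (hsub hu).resolve_left hnotA⟩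
    obtain ⟨x, _, hxA, hxB⟩ := hU₁c.isPreconnected A B hAopen hBopen hsub hAne hBne
    obtain ⟨v, hv, hfv⟩ := hxA
    exact hxB v (subset_closure hv) hfv
  intro u hu
  rcases mem_closure_iff_seq_limit.mp hu with ⟨x, hxU, hxlim⟩
  choose v hvU hv0 using fun n => hU1A (hxU n)
  obtain ⟨w, hwK, φ, hφmono, hφlim⟩ := hK.tendsto_subseq
    (fun n => (subset_closure (hvU n) : v n ∈ closure U₂))
  refine ⟨w, hwK, ?_⟩
  have h1 : Filter.Tendsto (fun n => f (x (φ n), v (φ n))) atTop (nhds (f (u, w))) := by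
    apply (hf.tendsto (u, w)).comp
    exact (hxlim.comp hφmono.tendsto_atTop).prodMk_nhds hφlim
  have h2 : (fun n => f (x (φ n), v (φ n))) = fun _ => (0 : ℂ) :=
    funext fun n => hv0 (φ n)
  rw [h2] at h1
  exact tendsto_nhds_unique h1 tendsto_const_nhds

set_option maxHeartbeats 1000000 in
theorem stmt10
    (P : MvPolynomial (Fin 2) ℂ) (hP : Irreducible P)
    (hdX : 0 < P.degreeOf 0) (hdY : 0 < P.degreeOf 1)
    (U₁ U₂ : Set ℂ)
    (hU₁b : Bornology.IsBounded U₁) (hU₁o : IsOpen U₁) (hU₁c : IsConnected U₁)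
    (hU₂b : Bornology.IsBounded U₂) (hU₂o : IsOpen U₂) (hU₂c : IsConnected U₂)
    (hne : ∃ p : ℂ × ℂ, MvPolynomial.eval ![p.1, p.2] P = 0 ∧ p.1 ∈ U₁ ∧ p.2 ∈ U₂)
    (hbd : ¬ ∃ p : ℂ × ℂ, MvPolynomial.eval ![p.1, p.2] P = 0 ∧
      ((p.1 ∈ frontier U₁ ∧ p.2 ∈ U₂) ∨ (p.1 ∈ U₁ ∧ p.2 ∈ frontier U₂))) :
    (∀ u ∈ closure U₁, ∃ v ∈ closure U₂, MvPolynomial.eval ![u, v] P = 0) ∧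
    (∀ v ∈ closure U₂, ∃ u ∈ closure U₁, MvPolynomial.eval ![u, v] P = 0) ∧
    (∀ u v : ℂ, MvPolynomial.eval ![u, v] P = 0 → u ∈ closure U₁ → v ∈ closure U₂ →
      (u ∈ frontier U₁ ↔ v ∈ frontier U₂)) := by
  classical
  have hf : Continuous fun p : ℂ × ℂ => MvPolynomial.eval ![p.1, p.2] P := by
    apply (MvPolynomial.continuous_eval P).comp
    apply continuous_pi
    intro i
    fin_cases i
    · simpa using continuous_fst
    · simpa using continuous_snd
  set Psw := MvPolynomial.rename (Equiv.swap (0 : Fin 2) 1) P with hPswdef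
  have hswap : ∀ u v : ℂ, MvPolynomial.eval ![v, u] Psw = MvPolynomial.eval ![u, v] P := by
    intro u v
    rw [hPswdef, MvPolynomial.eval_rename]
    have hc : (![v, u] ∘ ⇑(Equiv.swap (0 : Fin 2) 1)) = ![u, v] := by
      funext i; fin_cases i <;> simp
    rw [hc]
  have hPswirr : Irreducible Psw := by
    rw [hPswdef,
      show MvPolynomial.rename (Equiv.swap (0 : Fin 2) 1) P
        = MvPolynomial.renameEquiv ℂ (Equiv.swap (0 : Fin 2) 1) P from rfl]
    exact (MulEquiv.irreducible_iff _).mpr hP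
  have hPswdeg : 0 < Psw.degreeOf 1 := by
    have h2 := MvPolynomial.degreeOf_rename_of_injective
      (Equiv.injective (Equiv.swap (0 : Fin 2) 1)) (p := P) (0 : Fin 2)
    rw [Equiv.swap_apply_left] at h2
    rw [hPswdef, h2]
    exact hdX
  refine ⟨?_, ?_, ?_⟩
  · -- part (i)
    have hAopen : IsOpen {u : ℂ | ∃ v ∈ U₂, MvPolynomial.eval ![u, v] P = 0} :=
      curve_proj_open P hP hdY U₂ hU₂o
    exact fill_aux (fun p => MvPolynomial.eval ![p.1, p.2] P) hf U₁ U₂ hU₂b hU₁c hAopen hne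
      (fun u hu v hv h => hbd ⟨(u, v), h, Or.inr ⟨hu, hv⟩⟩)
  · -- part (ii)
    have hAopen : IsOpen {v : ℂ | ∃ u ∈ U₁, MvPolynomial.eval ![u, v] P = 0} := by
      have h2 : IsOpen {v : ℂ | ∃ u ∈ U₁, MvPolynomial.eval ![v, u] Psw = 0} :=
        curve_proj_open Psw hPswirr hPswdeg U₁ hU₁o
      have h3 : {v : ℂ | ∃ u ∈ U₁, MvPolynomial.eval ![v, u] Psw = 0}
          = {v : ℂ | ∃ u ∈ U₁, MvPolynomial.eval ![u, v] P = 0} := by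
        ext z
        exact exists_congr fun u => and_congr_right fun _ => by rw [hswap]
      rwa [h3] at h2
    have hg : Continuous fun p : ℂ × ℂ => MvPolynomial.eval ![p.2, p.1] P := by
      apply (MvPolynomial.continuous_eval P).comp
      apply continuous_pi
      intro i
      fin_cases i
      · simpa using continuous_snd
      · simpa using continuous_fst
    obtain ⟨p, hp0, hp1, hp2⟩ := hne
    exact fill_aux (fun p => MvPolynomial.eval ![p.2, p.1] P) hg U₂ U₁ hU₁b hU₂c hAopen
      ⟨(p.2, p.1), hp0, hp2, hp1⟩
      (fun v hv u hu h => hbd ⟨(u, v), h, Or.inl ⟨hu, hv⟩⟩)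
  · -- part (iii)
    intro u v h0 hu hv
    constructor
    · intro hfu
      rw [closure_eq_self_union_frontier] at hv
      rcases hv with hv | hv
      · exact (hbd ⟨(u, v), h0, Or.inl ⟨hfu, hv⟩⟩).elim
      · exact hv
    · intro hfv
      rw [closure_eq_self_union_frontier] at hu
      rcases hu with hu | hu
      · exact (hbd ⟨(u, v), h0, Or.inr ⟨hu, hfv⟩⟩).elim
      · exact hu
end

section
/- Let P ∈ ℂ[X,Y] be an irreducible polynomial of positive degree in X and of positive degree in Y, and let C = {(x,y) ∈ ℂ² : P(x,y) = 0}. Let U₁, U₂ ⊆ ℂ be bounded, open and connected, and assume that the boundaries ∂U₁ and ∂U₂ contain no isolated points. If C ∩ ((∂U₁ × U₂) ∪ (U₁ × ∂U₂)) is non-empty, then it is infinite. -/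
open Polynomial Filter Set Topology


noncomputable def Qpoly (P : MvPolynomial (Fin 2) ℂ) (x : ℂ) : Polynomial ℂ :=
  MvPolynomial.eval₂ Polynomial.C ![Polynomial.C x, Polynomial.X] P

lemma eval_Qpoly (P : MvPolynomial (Fin 2) ℂ) (x y : ℂ) :
    (Qpoly P x).eval y = MvPolynomial.eval ![x, y] P := by
  have h := MvPolynomial.eval₂_comp_left (Polynomial.evalRingHom y) Polynomial.C
    ![Polynomial.C x, Polynomial.X] P
  have h2 : (Polynomial.evalRingHom y).comp Polynomial.C = RingHom.id ℂ := by ext c; simp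
  have h3 : (⇑(Polynomial.evalRingHom y) ∘ ![Polynomial.C x, Polynomial.X]) = ![x, y] := by
    funext i; fin_cases i <;> simp
  rw [h2, h3] at h
  show (Polynomial.evalRingHom y) (MvPolynomial.eval₂ Polynomial.C ![Polynomial.C x, Polynomial.X] P) = _
  rw [h]
  rfl

lemma natDegree_Qpoly_le (P : MvPolynomial (Fin 2) ℂ) (x : ℂ) :
    (Qpoly P x).natDegree ≤ P.totalDegree := by
  rw [Qpoly, MvPolynomial.eval₂_eq]
  apply Polynomial.natDegree_sum_le_of_forall_le
  intro d hd
  calc (Polynomial.C (MvPolynomial.coeff d P) *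
        ∏ i ∈ d.support, (![Polynomial.C x, Polynomial.X] i) ^ d i).natDegree
      ≤ (Polynomial.C (MvPolynomial.coeff d P)).natDegree +
        (∏ i ∈ d.support, (![Polynomial.C x, Polynomial.X] i) ^ d i).natDegree :=
        Polynomial.natDegree_mul_le
    _ ≤ 0 + ∑ i ∈ d.support, ((![Polynomial.C x, Polynomial.X] i) ^ d i).natDegree := by
        gcongr
        · simp
        · exact Polynomial.natDegree_prod_le _ _
    _ ≤ ∑ i ∈ d.support, d i := by
        rw [zero_add]
        apply Finset.sum_le_sum
        intro i _
        refine (Polynomial.natDegree_pow_le).trans ?_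
        fin_cases i <;> simp
    _ ≤ P.totalDegree := MvPolynomial.le_totalDegree hd


lemma multiset_prod_map_le {α : Type*} (s : Multiset α) (f g : α → ℝ)
    (h : ∀ r ∈ s, 0 ≤ f r ∧ f r ≤ g r) : (s.map f).prod ≤ (s.map g).prod := by
  induction s using Multiset.induction with
  | empty => simp
  | cons a t ih =>
    simp only [Multiset.map_cons, Multiset.prod_cons]
    have ha := h a (Multiset.mem_cons_self a t)
    have ht : ∀ r ∈ t, 0 ≤ f r ∧ f r ≤ g r := fun r hr => h r (Multiset.mem_cons_of_mem hr)
    have h1 : (0:ℝ) ≤ (t.map f).prod :=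
      Multiset.prod_nonneg (by
        intro x hx
        obtain ⟨r, hr, rfl⟩ := Multiset.mem_map.mp hx
        exact (ht r hr).1)
    exact mul_le_mul ha.2 (ih ht) h1 (ha.1.trans ha.2)

lemma norm_multiset_prod' (s : Multiset ℂ) : ‖s.prod‖ = (s.map fun x => ‖x‖).prod := by
  induction s using Multiset.induction with
  | empty => simp
  | cons a t ih => simp [norm_mul, ih]

lemma key_estimate {D : ℕ} {p : Polynomial ℂ} (hdeg : p.natDegree ≤ D) {b z : ℂ} {ε : ℝ}
    (hroots : ∀ y : ℂ, p.eval y = 0 → ε ≤ dist y b) (hz : dist z b ≤ ε / 2) :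
    ((2:ℝ)/3) ^ D * ‖p.eval z‖ ≤ ‖p.eval b‖ := by
  have hfact := Splits.eq_prod_roots (IsAlgClosed.splits p)
  have h1 : ∀ y : ℂ, ‖p.eval y‖ =
      ‖p.leadingCoeff‖ * (p.roots.map fun r => ‖y - r‖).prod := by
    intro y
    conv_lhs => rw [hfact]
    rw [eval_mul, eval_C, norm_mul, eval_multiset_prod, Multiset.map_map, norm_multiset_prod',
      Multiset.map_map]
    congr 2
    apply Multiset.map_congr rfl
    intro r _
    simp
  have hcard : p.roots.card ≤ D := (Polynomial.card_roots' p).trans hdeg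
  have hterm : ∀ r ∈ p.roots, (0:ℝ) ≤ (2/3) * ‖z - r‖ ∧ (2/3) * ‖z - r‖ ≤ ‖b - r‖ := by
    intro r hr
    have hroot : p.eval r = 0 := (Polynomial.mem_roots'.mp hr).2
    have hεr : ε ≤ dist r b := hroots r hroot
    have hd1 : ‖z - r‖ ≤ dist z b + dist b r := by
      have := dist_triangle z b r
      simpa [Complex.dist_eq] using this
    have hbr : ‖b - r‖ = dist b r := (Complex.dist_eq b r).symm
    have hrb : dist r b = dist b r := dist_comm r b
    constructor
    · positivity
    · rw [hbr]; nlinarith [norm_nonneg (z - r)]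
  calc ((2:ℝ)/3) ^ D * ‖p.eval z‖
      = ‖p.leadingCoeff‖ * (((2:ℝ)/3) ^ D * (p.roots.map fun r => ‖z - r‖).prod) := by
        rw [h1]; ring
    _ ≤ ‖p.leadingCoeff‖ * (((2:ℝ)/3) ^ p.roots.card * (p.roots.map fun r => ‖z - r‖).prod) := by
        have hprodnn : (0:ℝ) ≤ (p.roots.map fun r => ‖z - r‖).prod :=
          Multiset.prod_nonneg (by
            intro x hx
            obtain ⟨r, _, rfl⟩ := Multiset.mem_map.mp hx
            exact norm_nonneg _)
        have h23 : ((2:ℝ)/3) ^ D ≤ ((2:ℝ)/3) ^ p.roots.card :=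
          pow_le_pow_of_le_one (by norm_num) (by norm_num) hcard
        exact mul_le_mul_of_nonneg_left (mul_le_mul_of_nonneg_right h23 hprodnn) (norm_nonneg _)
    _ = ‖p.leadingCoeff‖ * (p.roots.map fun r => (2/3) * ‖z - r‖).prod := by
        congr 1
        rw [Multiset.prod_map_mul (m := p.roots) (f := fun _ => (2:ℝ)/3) (g := fun r => ‖z - r‖)]
        congr 1
        rw [Multiset.map_const', Multiset.prod_replicate]
    _ ≤ ‖p.leadingCoeff‖ * (p.roots.map fun r => ‖b - r‖).prod := by
        exact mul_le_mul_of_nonneg_left (multiset_prod_map_le _ _ _ hterm) (norm_nonneg _)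
    _ = ‖p.eval b‖ := (h1 b).symm


section AuxStmt11

lemma exists_root_near' (P : MvPolynomial (Fin 2) ℂ) (a b : ℂ)
    (hQa : Qpoly P a ≠ 0) {ε : ℝ} (hε : 0 < ε)
    (hab : MvPolynomial.eval ![a, b] P = 0) :
    ∀ᶠ x in 𝓝 a, ∃ y : ℂ, dist y b < ε ∧ MvPolynomial.eval ![x, y] P = 0 := by
  -- pick z near b that is not a root of `Qpoly P a`
  have hfin : {y : ℂ | (Qpoly P a).IsRoot y}.Finite := Polynomial.finite_setOf_isRoot hQa
  have hballinf : (Metric.ball b (ε/2)).Infinite :=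
    infinite_of_mem_nhds b (Metric.ball_mem_nhds b (by linarith))
  obtain ⟨z, hzball, hznr⟩ := (hballinf.diff hfin).nonempty
  have hzdist : dist z b ≤ ε / 2 := le_of_lt (by simpa [Metric.mem_ball] using hzball)
  have hzne : MvPolynomial.eval ![a, z] P ≠ 0 := by
    rw [← eval_Qpoly]; exact hznr
  set D := P.totalDegree with hD
  -- continuity
  have hcont : ∀ y : ℂ, Continuous fun x : ℂ => MvPolynomial.eval ![x, y] P := by
    intro y
    have h1 : Continuous fun x : ℂ => (![x, y] : Fin 2 → ℂ) := by
      apply continuous_pi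
      intro i
      fin_cases i
      · simpa using continuous_id'
      · simpa using continuous_const
    exact (MvPolynomial.continuous_eval P).comp h1
  have hfa : (fun x : ℂ => ((2:ℝ)/3) ^ D * ‖MvPolynomial.eval ![x, z] P‖
      - ‖MvPolynomial.eval ![x, b] P‖) a
      = ((2:ℝ)/3) ^ D * ‖MvPolynomial.eval ![a, z] P‖ := by
    simp [hab]
  have hcont2 : Continuous fun x : ℂ => ((2:ℝ)/3) ^ D * ‖MvPolynomial.eval ![x, z] P‖
      - ‖MvPolynomial.eval ![x, b] P‖ :=
    ((continuous_const.mul (hcont z).norm).sub (hcont b).norm)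
  have hpos : (0:ℝ) < ((2:ℝ)/3) ^ D * ‖MvPolynomial.eval ![a, z] P‖ := by
    have : (0:ℝ) < ‖MvPolynomial.eval ![a, z] P‖ := norm_pos_iff.mpr hzne
    positivity
  have h0 : (0:ℝ) < ((2:ℝ)/3) ^ D * ‖MvPolynomial.eval ![a, z] P‖
      - ‖MvPolynomial.eval ![a, b] P‖ := by
    simpa [hab] using hpos
  have hev : ∀ᶠ x in 𝓝 a, 0 < ((2:ℝ)/3) ^ D * ‖MvPolynomial.eval ![x, z] P‖
      - ‖MvPolynomial.eval ![x, b] P‖ :=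
    (hcont2.tendsto a).eventually (eventually_gt_nhds h0)
  filter_upwards [hev] with x hx
  by_contra hcon
  push_neg at hcon
  have hroots : ∀ y : ℂ, (Qpoly P x).eval y = 0 → ε ≤ dist y b := by
    intro y hy
    by_contra hlt
    push_neg at hlt
    exact hcon y hlt (by rw [← eval_Qpoly]; exact hy)
  have := key_estimate (natDegree_Qpoly_le P x) hroots hzdist
  rw [eval_Qpoly, eval_Qpoly] at this
  linarith

lemma acc_inter_infinite {A V : Set ℂ} {a : ℂ} (h : AccPt a (𝓟 A)) (hV : V ∈ 𝓝 a) :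
    {x : ℂ | x ∈ A ∧ x ∈ V ∧ x ≠ a}.Infinite := by
  by_contra hfin
  rw [Set.not_infinite] at hfin
  have hclosed : IsClosed {x : ℂ | x ∈ A ∧ x ∈ V ∧ x ≠ a} := hfin.isClosed
  have haS : a ∉ {x : ℂ | x ∈ A ∧ x ∈ V ∧ x ≠ a} := fun hc => hc.2.2 rfl
  have hW : V ∩ {x : ℂ | x ∈ A ∧ x ∈ V ∧ x ≠ a}ᶜ ∈ 𝓝 a :=
    Filter.inter_mem hV (hclosed.isOpen_compl.mem_nhds haS)
  obtain ⟨y, ⟨⟨hyV, hyS⟩, hyA⟩, hyne⟩ := accPt_iff_nhds.mp h _ hW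
  exact hyS ⟨hyA, hyV, hyne⟩

lemma aux_infinite (P : MvPolynomial (Fin 2) ℂ) {a b : ℂ}
    (hab : MvPolynomial.eval ![a, b] P = 0)
    {A B : Set ℂ} (haA : a ∈ A) (hacc : AccPt a (𝓟 A)) (hBo : IsOpen B) (hbB : b ∈ B) :
    {p : ℂ × ℂ | MvPolynomial.eval ![p.1, p.2] P = 0 ∧ p.1 ∈ A ∧ p.2 ∈ B}.Infinite := by
  by_cases hQ : Qpoly P a = 0
  · have hBinf : B.Infinite := infinite_of_mem_nhds b (hBo.mem_nhds hbB)
    have hsub : (fun y : ℂ => ((a : ℂ), y)) '' B ⊆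
        {p : ℂ × ℂ | MvPolynomial.eval ![p.1, p.2] P = 0 ∧ p.1 ∈ A ∧ p.2 ∈ B} := by
      rintro ⟨u, v⟩ ⟨y, hy, heq⟩
      obtain ⟨rfl, rfl⟩ : a = u ∧ y = v := by simpa [Prod.ext_iff] using heq
      refine ⟨?_, haA, hy⟩
      rw [← eval_Qpoly, hQ, Polynomial.eval_zero]
    exact Set.Infinite.mono hsub
      (hBinf.image (fun u _ v _ huv => by simpa using huv))
  · obtain ⟨ε, hε, hball⟩ := Metric.isOpen_iff.mp hBo b hbB
    obtain ⟨V, hV, hVspec⟩ := (exists_root_near' P a b hQ hε hab).exists_mem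
    have hinf := acc_inter_infinite hacc hV
    apply Set.Infinite.of_image Prod.fst
    refine hinf.mono ?_
    intro x ⟨hxA, hxV, _⟩
    obtain ⟨y, hyd, hy0⟩ := hVspec x hxV
    exact ⟨(x, y), ⟨hy0, hxA, hball (by simpa [Metric.mem_ball] using hyd)⟩, rfl⟩

end AuxStmt11

theorem stmt11
    (P : MvPolynomial (Fin 2) ℂ) (hP : Irreducible P)
    (hdX : 0 < P.degreeOf 0) (hdY : 0 < P.degreeOf 1)
    (U₁ U₂ : Set ℂ)
    (hU₁b : Bornology.IsBounded U₁) (hU₁o : IsOpen U₁) (hU₁c : IsConnected U₁)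
    (hU₂b : Bornology.IsBounded U₂) (hU₂o : IsOpen U₂) (hU₂c : IsConnected U₂)
    -- the boundaries contain no isolated points
    (hU₁i : ∀ p ∈ frontier U₁, AccPt p (Filter.principal (frontier U₁)))
    (hU₂i : ∀ p ∈ frontier U₂, AccPt p (Filter.principal (frontier U₂)))
    (hne : {p : ℂ × ℂ | MvPolynomial.eval ![p.1, p.2] P = 0 ∧
      ((p.1 ∈ frontier U₁ ∧ p.2 ∈ U₂) ∨ (p.1 ∈ U₁ ∧ p.2 ∈ frontier U₂))}.Nonempty) :
    {p : ℂ × ℂ | MvPolynomial.eval ![p.1, p.2] P = 0 ∧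
      ((p.1 ∈ frontier U₁ ∧ p.2 ∈ U₂) ∨ (p.1 ∈ U₁ ∧ p.2 ∈ frontier U₂))}.Infinite := by
  obtain ⟨⟨a, b⟩, hPab, hcase⟩ := hne
  rcases hcase with ⟨h1, h2⟩ | ⟨h1, h2⟩
  · refine (aux_infinite P hPab h1 (hU₁i a h1) hU₂o h2).mono ?_
    rintro ⟨u, v⟩ ⟨hp, hA, hB⟩
    exact ⟨hp, Or.inl ⟨hA, hB⟩⟩
  · set P' := MvPolynomial.rename (Equiv.swap (0 : Fin 2) 1) P with hP'
    have hswap : ∀ u v : ℂ, MvPolynomial.eval ![u, v] P' = MvPolynomial.eval ![v, u] P := by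
      intro u v
      have hcmp : (![u, v] ∘ (Equiv.swap (0 : Fin 2) 1)) = ![v, u] := by
        funext i
        fin_cases i <;> simp [Equiv.swap_apply_left, Equiv.swap_apply_right]
      rw [hP', MvPolynomial.eval_rename, hcmp]
    have hP'ab : MvPolynomial.eval ![b, a] P' = 0 := by rw [hswap]; exact hPab
    have hinf := aux_infinite P' hP'ab h2 (hU₂i b h2) hU₁o h1
    have himg : (fun q : ℂ × ℂ => (q.2, q.1)) ''
        {p : ℂ × ℂ | MvPolynomial.eval ![p.1, p.2] P' = 0 ∧ p.1 ∈ frontier U₂ ∧ p.2 ∈ U₁} ⊆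
        {p : ℂ × ℂ | MvPolynomial.eval ![p.1, p.2] P = 0 ∧
          ((p.1 ∈ frontier U₁ ∧ p.2 ∈ U₂) ∨ (p.1 ∈ U₁ ∧ p.2 ∈ frontier U₂))} := by
      rintro ⟨u, v⟩ ⟨⟨x, y⟩, ⟨hp, hA, hB⟩, heq⟩
      obtain ⟨rfl, rfl⟩ : y = u ∧ x = v := by simpa [Prod.ext_iff] using heq
      rw [hswap] at hp
      exact ⟨hp, Or.inr ⟨hB, hA⟩⟩
    exact Set.Infinite.mono himg
      (hinf.image (fun p _ q _ hpq => by
        simpa [Prod.ext_iff, and_comm] using hpq))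
end

section
/- Let f ∈ ℂ[X] be a monic polynomial of degree d ≥ 2 and let L(X) = aX + b with a ≠ 0 be a linear polynomial satisfying L(f(X)) = f(L(X)) as polynomials. Suppose R' > 0 and Φ is an analytic function on {z ∈ ℂ : |z| > R'} such that Φ(z)/z → 1 as |z| → ∞ and Φ(f(z)) = Φ(z)^d whenever |z| > R' and |f(z)| > R'. Then there exist ζ ∈ ℂ with ζ^{d−1} = 1 and a real R'' ≥ R' such that Φ(L(z)) = ζ·Φ(z) for all z with |z| > R''. -/
open Polynomial

open Filter in
private lemma stmt16_preconn (R : ℝ) (hR : 0 ≤ R) :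
    IsPreconnected {z : ℂ | R < ‖z‖} := by
  have himg : {z : ℂ | R < ‖z‖} =
      (fun p : ℝ × ℝ => (p.1 : ℂ) * Complex.exp (p.2 * Complex.I)) ''
        (Set.Ioi R ×ˢ (Set.univ : Set ℝ)) := by
    ext z
    constructor
    · intro hz
      refine ⟨(‖z‖, Complex.arg z), ⟨hz, trivial⟩, ?_⟩
      simp [Complex.norm_mul_exp_arg_mul_I z]
    · rintro ⟨⟨r, θ⟩, ⟨hr, -⟩, rfl⟩
      have hr' : (0:ℝ) ≤ r := le_trans hR (le_of_lt hr)
      simp only [Set.mem_setOf_eq, norm_mul, Complex.norm_exp_ofReal_mul_I,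
        Complex.norm_real, Real.norm_eq_abs, mul_one, abs_of_nonneg hr']
      exact hr
  rw [himg]
  exact (isPreconnected_Ioi.prod isPreconnected_univ).image _ (by fun_prop)

theorem stmt16
    (f : Polynomial ℂ) (hmonic : f.Monic) (hdeg : 2 ≤ f.natDegree)
    (a b : ℂ) (ha : a ≠ 0)
    (hcomm : (C a * X + C b).comp f = f.comp (C a * X + C b))
    (R' : ℝ) (hR' : 0 < R')
    (Φ : ℂ → ℂ)
    (hΦan : AnalyticOnNhd ℂ Φ {z : ℂ | R' < ‖z‖})
    (hΦtang : Filter.Tendsto (fun z : ℂ => Φ z / z)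
      (Filter.comap (fun z : ℂ => ‖z‖) Filter.atTop) (nhds 1))
    (hΦfun : ∀ z : ℂ, R' < ‖z‖ → R' < ‖f.eval z‖ →
      Φ (f.eval z) = Φ z ^ f.natDegree) :
    ∃ ζ : ℂ, ζ ^ (f.natDegree - 1) = 1 ∧
      ∃ R'' : ℝ, R' ≤ R'' ∧ ∀ z : ℂ, R'' < ‖z‖ → Φ (a * z + b) = ζ * Φ z := by
  classical
  set d := f.natDegree with hd_def
  have hd1 : 1 ≤ d := le_trans one_le_two hdeg
  set F : Filter ℂ := Filter.comap (fun z : ℂ => ‖z‖) Filter.atTop with hF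
  have hFco : F = Bornology.cobounded ℂ := by
    rw [hF]
    simpa using (comap_norm_atTop (E := ℂ))
  have habs : Filter.Tendsto (fun z : ℂ => ‖z‖) F Filter.atTop :=
    Filter.tendsto_comap
  have hnorm : Filter.Tendsto (fun z : ℂ => ‖z‖) F Filter.atTop := by
    simpa using habs
  -- the affine map z ↦ a z + b
  have hevalL : ∀ z : ℂ, (C a * X + C b).eval z = a * z + b := by intro z; simp
  have hLnorm : Filter.Tendsto (fun z : ℂ => ‖a * z + b‖) F Filter.atTop := by
    have h := (C a * X + C b).tendsto_norm_atTop
      (by rw [degree_linear ha]; norm_num) hnorm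
    simpa only [hevalL] using h
  have hLabs : Filter.Tendsto (fun z : ℂ => ‖a * z + b‖) F Filter.atTop := by
    simpa using hLnorm
  have hLF : Filter.Tendsto (fun z : ℂ => a * z + b) F F := by
    rw [hF, Filter.tendsto_comap_iff]; exact hLabs
  -- f has positive degree
  have hf0 : f ≠ 0 := hmonic.ne_zero
  have hdegf : 0 < f.degree := by
    rw [Polynomial.degree_eq_natDegree hf0]
    exact_mod_cast lt_of_lt_of_le (by norm_num) hdeg
  have hfnorm : Filter.Tendsto (fun z : ℂ => ‖f.eval z‖) F Filter.atTop :=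
    f.tendsto_norm_atTop hdegf hnorm
  have hfabs : Filter.Tendsto (fun z : ℂ => ‖f.eval z‖) F Filter.atTop := by
    simpa using hfnorm
  have hfF : Filter.Tendsto (fun z : ℂ => f.eval z) F F := by
    rw [hF, Filter.tendsto_comap_iff]; exact hfabs
  -- growth: eventually |f z| ≥ |z| + 1
  have hdivXdeg : 0 < f.divX.degree := by
    have h1 : 0 < f.divX.natDegree := by
      rw [Polynomial.natDegree_divX_eq_natDegree_tsub_one]
      omega
    exact Polynomial.natDegree_pos_iff_degree_pos.mp h1
  have hdivXnorm : Filter.Tendsto (fun z : ℂ => ‖f.divX.eval z‖) F Filter.atTop :=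
    f.divX.tendsto_norm_atTop hdivXdeg hnorm
  have hgrow : ∀ᶠ z in F, ‖z‖ + 1 ≤ ‖f.eval z‖ := by
    have h1 : ∀ᶠ z in F, (2:ℝ) ≤ ‖f.divX.eval z‖ := by
      simpa using hdivXnorm.eventually_ge_atTop 2
    have h2 : ∀ᶠ z in F, ‖f.coeff 0‖ + 1 ≤ ‖z‖ :=
      habs.eventually_ge_atTop _
    filter_upwards [h1, h2] with z h1 h2
    have heq : f.eval z = z * f.divX.eval z + f.coeff 0 := by
      conv_lhs => rw [← f.X_mul_divX_add]
      rw [Polynomial.eval_add, Polynomial.eval_mul, Polynomial.eval_X, Polynomial.eval_C]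
    have htri : ‖z * f.divX.eval z‖ - ‖f.coeff 0‖
        ≤ ‖z * f.divX.eval z + f.coeff 0‖ := by
      have := norm_add_le (z * f.divX.eval z + f.coeff 0) (-(f.coeff 0))
      rw [add_neg_cancel_right, norm_neg] at this
      linarith
    have hmul : ‖z * f.divX.eval z‖
        = ‖z‖ * ‖f.divX.eval z‖ := norm_mul _ _
    rw [heq]
    have hz0 : (0:ℝ) ≤ ‖z‖ := norm_nonneg z
    nlinarith [htri, hmul]
  -- Φ nonzero eventually
  have hΦne : ∀ᶠ z in F, Φ z ≠ 0 := by
    have h := hΦtang.eventually_ne one_ne_zero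
    filter_upwards [h] with z hz hΦz
    exact hz (by simp [hΦz])
  -- the basic condition P
  set P : ℂ → Prop := fun z => R' < ‖z‖ ∧ Φ z ≠ 0 ∧
      ‖z‖ + 1 ≤ ‖f.eval z‖ with hP_def
  have hP : ∀ᶠ z in F, P z := by
    filter_upwards [habs.eventually_gt_atTop R', hΦne, hgrow] with z h1 h2 h3
    exact ⟨h1, h2, h3⟩
  have hQ : ∀ᶠ z in F, P z ∧ P (f.eval z) := hP.and (hfF.eventually hP)
  -- extract radii
  have hextract : ∀ {p : ℂ → Prop}, (∀ᶠ z in F, p z) →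
      ∃ R : ℝ, ∀ z : ℂ, R ≤ ‖z‖ → p z := by
    intro p hp
    rw [hF, Filter.eventually_comap, Filter.eventually_atTop] at hp
    obtain ⟨R, hR⟩ := hp
    exact ⟨R, fun z hz => hR (‖z‖) hz z rfl⟩
  obtain ⟨R₁, hR₁⟩ := hextract hQ
  obtain ⟨R₂, hR₂⟩ := hextract (hLabs.eventually_gt_atTop R₁)
  set R'' : ℝ := max R' (max R₁ R₂) with hR''_def
  have hR'R'' : R' ≤ R'' := le_max_left _ _
  have hR''pos : 0 < R'' := lt_of_lt_of_le hR' hR'R''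
  have hR₁R'' : R₁ ≤ R'' := le_trans (le_max_left _ _) (le_max_right _ _)
  have hR₂R'' : R₂ ≤ R'' := le_trans (le_max_right _ _) (le_max_right _ _)
  -- membership facts
  have hmem : ∀ z : ℂ, R'' < ‖z‖ → P z ∧ P (f.eval z) :=
    fun z hz => hR₁ z (le_of_lt (lt_of_le_of_lt hR₁R'' hz))
  have hmemL : ∀ z : ℂ, R'' < ‖z‖ → P (a * z + b) ∧ P (f.eval (a * z + b)) :=
    fun z hz => hR₁ _ (le_of_lt (hR₂ z (le_of_lt (lt_of_le_of_lt hR₂R'' hz))))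
  have hfV : ∀ z : ℂ, R'' < ‖z‖ → R'' < ‖f.eval z‖ := by
    intro z hz
    have := (hmem z hz).1.2.2
    linarith
  -- the commutation pointwise
  have hcommz : ∀ z : ℂ, a * f.eval z + b = f.eval (a * z + b) := by
    intro z
    have h := congrArg (Polynomial.eval z) hcomm
    simpa [Polynomial.eval_comp] using h
  -- the quotient function
  set g : ℂ → ℂ := fun z => Φ (a * z + b) / Φ z with hg_def
  -- functional equation
  have hfunEq : ∀ z : ℂ, R'' < ‖z‖ → g (f.eval z) = g z ^ d := by
    intro z hz
    obtain ⟨hPz, hPfz⟩ := hmem z hz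
    obtain ⟨hPL, hPfL⟩ := hmemL z hz
    have h1 : Φ (f.eval z) = Φ z ^ d := hΦfun z hPz.1 hPfz.1
    have h2 : Φ (f.eval (a * z + b)) = Φ (a * z + b) ^ d := hΦfun _ hPL.1 hPfL.1
    show Φ (a * f.eval z + b) / Φ (f.eval z) = (Φ (a * z + b) / Φ z) ^ d
    rw [hcommz, h1, h2, div_pow]
  -- iteration
  have hiter : ∀ n : ℕ, ∀ z : ℂ, R'' < ‖z‖ →
      R'' < ‖f.eval^[n] z‖ ∧
      ‖z‖ + n ≤ ‖f.eval^[n] z‖ ∧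
      g (f.eval^[n] z) = g z ^ d ^ n := by
    intro n
    induction n with
    | zero => intro z hz; simpa using hz
    | succ n ih =>
      intro z hz
      obtain ⟨h1, h2, h3⟩ := ih z hz
      have hgr : ‖f.eval^[n] z‖ + 1 ≤ ‖f.eval (f.eval^[n] z)‖ :=
        (hmem _ h1).1.2.2
      rw [Function.iterate_succ_apply']
      refine ⟨by linarith, ?_, ?_⟩
      · push_cast; linarith
      · rw [hfunEq _ h1, h3, ← pow_mul, pow_succ]
  -- limit of g at infinity is a
  have hztendF : Filter.Tendsto (fun z : ℂ => z⁻¹) F (nhds 0) := by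
    rw [hFco]; exact Filter.tendsto_inv₀_cobounded
  have T2 : Filter.Tendsto (fun z : ℂ => Φ (a * z + b) / (a * z + b)) F (nhds 1) :=
    hΦtang.comp hLF
  have T3 : Filter.Tendsto (fun z : ℂ => (a * z + b) / z) F (nhds a) := by
    have h : Filter.Tendsto (fun z : ℂ => a + b * z⁻¹) F (nhds (a + b * 0)) :=
      tendsto_const_nhds.add (tendsto_const_nhds.mul hztendF)
    rw [mul_zero, add_zero] at h
    refine h.congr' ?_
    filter_upwards [habs.eventually_gt_atTop 0] with z hz
    have hz0 : z ≠ 0 := by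
      intro h0; rw [h0] at hz; simp at hz
    field_simp
  have hgtend : Filter.Tendsto g F (nhds a) := by
    have h : Filter.Tendsto
        (fun z : ℂ => Φ (a * z + b) / (a * z + b) * ((a * z + b) / z) / (Φ z / z))
        F (nhds (1 * a / 1)) := (T2.mul T3).div hΦtang one_ne_zero
    rw [one_mul, div_one] at h
    refine h.congr' ?_
    filter_upwards [habs.eventually_gt_atTop 0, hLabs.eventually_gt_atTop 0, hΦne]
      with z h1 h2 h3
    have hz0 : z ≠ 0 := by intro h0; rw [h0] at h1; simp at h1
    have hab0 : a * z + b ≠ 0 := by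
      intro h0; rw [h0] at h2; simp at h2
    show Φ (a * z + b) / (a * z + b) * ((a * z + b) / z) / (Φ z / z) = Φ (a * z + b) / Φ z
    field_simp
  -- |g| = 1 on V
  have hVabs : ∀ z : ℂ, R'' < ‖z‖ → ‖g z‖ = 1 := by
    intro z hz
    have hdiv : Filter.Tendsto (fun n : ℕ => f.eval^[n] z) Filter.atTop F := by
      rw [hF, Filter.tendsto_comap_iff]
      refine Filter.tendsto_atTop_mono (fun n => (hiter n z hz).2.1) ?_
      exact Filter.tendsto_atTop_add_const_left _ _ tendsto_natCast_atTop_atTop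
    have h1 : Filter.Tendsto (fun n : ℕ => g z ^ d ^ n) Filter.atTop (nhds a) := by
      have h := hgtend.comp hdiv
      refine h.congr fun n => ?_
      exact (hiter n z hz).2.2
    have h2 : Filter.Tendsto (fun n : ℕ => ‖g z‖ ^ d ^ n) Filter.atTop
        (nhds (‖a‖)) := by
      have h := (continuous_norm.tendsto a).comp h1
      simpa [Function.comp_def, norm_pow] using h
    have hdn : Filter.Tendsto (fun n : ℕ => d ^ n) Filter.atTop Filter.atTop :=
      tendsto_pow_atTop_atTop_of_one_lt (lt_of_lt_of_le one_lt_two hdeg)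
    by_contra hne
    rcases lt_or_gt_of_ne hne with hlt | hgt
    · have h3 : Filter.Tendsto (fun n : ℕ => ‖g z‖ ^ d ^ n) Filter.atTop
          (nhds 0) :=
        (tendsto_pow_atTop_nhds_zero_of_lt_one (norm_nonneg _) hlt).comp hdn
      have := tendsto_nhds_unique h2 h3
      exact ha (by simpa using this)
    · have h3 : Filter.Tendsto (fun n : ℕ => ‖g z‖ ^ d ^ n) Filter.atTop
          Filter.atTop := (tendsto_pow_atTop_atTop_of_one_lt hgt).comp hdn
      exact not_tendsto_nhds_of_tendsto_atTop h3 _ h2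
  -- g is differentiable on V
  set V : Set ℂ := {z : ℂ | R'' < ‖z‖} with hV_def
  have hVopen : IsOpen V := by
    have : V = (fun z : ℂ => ‖z‖) ⁻¹' Set.Ioi R'' := rfl
    rw [this]
    exact isOpen_Ioi.preimage continuous_norm
  have hVpre : IsPreconnected V := stmt16_preconn R'' (le_of_lt hR''pos)
  have hgdiff : DifferentiableOn ℂ g V := by
    intro z hz
    have hz' : R'' < ‖z‖ := hz
    have h1 : AnalyticAt ℂ Φ (a * z + b) := hΦan _ (hmemL z hz').1.1
    have h2 : AnalyticAt ℂ Φ z := hΦan _ (hmem z hz').1.1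
    have haff : DifferentiableAt ℂ (fun z : ℂ => a * z + b) z := by fun_prop
    have hd1' : DifferentiableAt ℂ (fun z : ℂ => Φ (a * z + b)) z :=
      h1.differentiableAt.comp z haff
    exact ((hd1'.div h2.differentiableAt (hmem z hz').1.2.1)).differentiableWithinAt
  -- maximum modulus
  set z₀ : ℂ := ((R'' + 1 : ℝ) : ℂ) with hz₀_def
  have hz₀abs : ‖z₀‖ = R'' + 1 := by
    rw [hz₀_def, Complex.norm_real, Real.norm_eq_abs, abs_of_pos (by linarith)]
  have hz₀V : z₀ ∈ V := by
    show R'' < ‖z₀‖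
    rw [hz₀abs]; linarith
  have hmax : IsMaxOn (norm ∘ g) V z₀ := by
    intro w hw
    have hw' : R'' < ‖w‖ := hw
    show ‖g w‖ ≤ ‖g z₀‖
    rw [hVabs w hw', hVabs z₀ hz₀V]
  have heqOn : Set.EqOn g (Function.const ℂ (g z₀)) V :=
    Complex.eqOn_of_isPreconnected_of_isMaxOn_norm hVpre hVopen hgdiff hz₀V hmax
  -- the constant equals a
  have hconst_a : g z₀ = a := by
    set u : ℕ → ℂ := fun n => ((R'' + 1 + n : ℝ) : ℂ) with hu_def
    have huabs : ∀ n : ℕ, ‖u n‖ = R'' + 1 + n := by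
      intro n
      rw [hu_def]
      have h0 : (0:ℝ) ≤ R'' + 1 + n := by positivity
      rw [Complex.norm_real, Real.norm_eq_abs, abs_of_nonneg h0]
    have huF : Filter.Tendsto u Filter.atTop F := by
      rw [hF, Filter.tendsto_comap_iff]
      have : Filter.Tendsto (fun n : ℕ => R'' + 1 + (n:ℝ)) Filter.atTop Filter.atTop :=
        Filter.tendsto_atTop_add_const_left _ _ tendsto_natCast_atTop_atTop
      refine this.congr fun n => ?_
      exact (huabs n).symm
    have h1 : Filter.Tendsto (g ∘ u) Filter.atTop (nhds a) := hgtend.comp huF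
    have h2 : ∀ n : ℕ, (g ∘ u) n = g z₀ := by
      intro n
      have : u n ∈ V := by
        show R'' < ‖u n‖
        rw [huabs n]
        have : (0:ℝ) ≤ (n:ℝ) := Nat.cast_nonneg n
        linarith
      exact heqOn this
    have h3 : Filter.Tendsto (g ∘ u) Filter.atTop (nhds (g z₀)) := by
      rw [show (g ∘ u) = fun _ => g z₀ from funext h2]
      exact tendsto_const_nhds
    exact tendsto_nhds_unique h3 h1
  -- a is a (d-1)-th root of unity
  have hroot : a ^ (d - 1) = 1 := by
    have h1 : g (f.eval z₀) = g z₀ ^ d := hfunEq z₀ hz₀V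
    have h2 : f.eval z₀ ∈ V := hfV z₀ hz₀V
    have h3 : g (f.eval z₀) = g z₀ := heqOn h2
    rw [h3, hconst_a] at h1
    have h4 : a ^ d = a ^ (d - 1) * a := by
      rw [← pow_succ, Nat.sub_add_cancel hd1]
    rw [h4] at h1
    exact mul_right_cancel₀ ha (by rw [one_mul]; exact h1.symm)
  refine ⟨a, hroot, R'', hR'R'', ?_⟩
  intro z hz
  have hgz : g z = a := (heqOn hz).trans hconst_a
  have hΦz : Φ z ≠ 0 := (hmem z hz).1.2.1
  exact (div_eq_iff hΦz).mp hgz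
end

section
/- Let K be a number field, realized as a subfield of a fixed algebraic closure ℚ̄ of ℚ. Let f ∈ K[X] be a monic non-exceptional polynomial of degree d ≥ 2, and let α ∈ K be such that |f^∘n(α)|_v → ∞ as n → ∞ for some finite place v of K which is of good reduction for f and co-prime to d. Let P ∈ K[X,Y] be irreducible in ℚ̄[X,Y] and C = {(x,y) ∈ ℚ̄² : P(x,y) = 0}. Suppose C is pre-periodic under the coordinatewise action of (f, f): there exist integers k ≥ 0 and j ≥ 1 with {(f^∘(k+j)(x), f^∘(k+j)(y)) : (x,y) ∈ C} = {(f^∘k(x), f^∘k(y)) : (x,y) ∈ C}. If C contains a point (x,y) with x ∈ G_α and y ∈ G_α, then there exist n, m ≥ 0 such that f^∘n(x) = f^∘m(y) for every (x,y) ∈ C. -/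
open Polynomial

/-- The `n`-th iterate `f^∘n` of a polynomial, as a polynomial. -/
noncomputable def polyIter {R : Type*} [CommSemiring R] (f : R[X]) : ℕ → R[X]
  | 0 => X
  | n + 1 => (polyIter f n).comp f

/-- Evaluation of the `n`-th iterate of `f ∈ K[X]` at a point of a `K`-algebra `A`. -/
noncomputable def iterEval {K A : Type*} [CommSemiring K] [CommSemiring A] [Algebra K A]
    (f : K[X]) (n : ℕ) (x : A) : A :=
  Polynomial.aeval x (polyIter f n)

/-- The grand orbit `G_a = {β : f^∘n(β) = f^∘m(a) for some n, m ≥ 0}`. -/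
def grandOrbit {K A : Type*} [CommSemiring K] [CommSemiring A] [Algebra K A]
    (f : K[X]) (a : A) : Set A :=
  {β | ∃ n m : ℕ, iterEval f n β = iterEval f m a}

/-- A polynomial of degree `d` over a field is exceptional if it is linearly conjugate to
`X^d` or to `±T_d`, where `T_d` is normalized by `T_d(X + X⁻¹) = X^d + X^(-d)`. -/
def IsExceptional {F : Type*} [Field F] (f : F[X]) : Prop :=
  ∃ a b : F, a ≠ 0 ∧
    ((C a * X + C b).comp f = (X ^ f.natDegree : F[X]).comp (C a * X + C b) ∨
     (C a * X + C b).comp f = (dickson 1 1 f.natDegree).comp (C a * X + C b) ∨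
     (C a * X + C b).comp f = (-dickson 1 1 f.natDegree).comp (C a * X + C b))

/- ### Auxiliary lemmas -/

lemma polyIter_add {R : Type*} [CommSemiring R] (f : R[X]) (m n : ℕ) :
    polyIter f (m + n) = (polyIter f m).comp (polyIter f n) := by
  induction n with
  | zero => simp [polyIter]
  | succ n ih =>
      show polyIter f (m + n + 1) = _
      rw [polyIter, ih, polyIter, comp_assoc]

lemma iterEval_add {K A : Type*} [CommSemiring K] [CommSemiring A] [Algebra K A]
    (f : K[X]) (m n : ℕ) (x : A) :
    iterEval f (m + n) x = iterEval f m (iterEval f n x) := by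
  rw [iterEval, polyIter_add, aeval_comp]; rfl

lemma polyIter_monic {K : Type*} [CommRing K] [Nontrivial K] {f : K[X]} (hf : f.Monic)
    (hd : f.natDegree ≠ 0) (n : ℕ) : (polyIter f n).Monic := by
  induction n with
  | zero => exact monic_X
  | succ n ih => exact ih.comp hf hd

lemma polyIter_natDegree {K : Type*} [Field K] (f : K[X]) (n : ℕ) :
    (polyIter f n).natDegree = f.natDegree ^ n := by
  induction n with
  | zero => simp [polyIter]
  | succ n ih => rw [polyIter, natDegree_comp, ih, pow_succ]

lemma image_pair_iter {K A : Type*} [CommSemiring K] [CommSemiring A] [Algebra K A]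
    (f : K[X]) (C : Set (A × A)) (k j : ℕ)
    (him : (fun p : A × A => (iterEval f (k + j) p.1, iterEval f (k + j) p.2)) '' C =
      (fun p : A × A => (iterEval f k p.1, iterEval f k p.2)) '' C) (t : ℕ) :
    (fun p : A × A => (iterEval f (k + t * j) p.1, iterEval f (k + t * j) p.2)) '' C =
      (fun p : A × A => (iterEval f k p.1, iterEval f k p.2)) '' C := by
  have hcomp : ∀ (a b : ℕ),
      (fun p : A × A => (iterEval f (a + b) p.1, iterEval f (a + b) p.2)) '' C =
      (fun p : A × A => (iterEval f a p.1, iterEval f a p.2)) ''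
        ((fun p : A × A => (iterEval f b p.1, iterEval f b p.2)) '' C) := by
    intro a b
    rw [Set.image_image]
    funext p
    simp [iterEval_add]
  induction t with
  | zero => simp
  | succ t ih =>
      have harith : k + (t + 1) * j = t * j + (k + j) := by ring
      rw [harith, hcomp, him]
      calc (fun p : A × A => (iterEval f (t * j) p.1, iterEval f (t * j) p.2)) ''
            ((fun p : A × A => (iterEval f k p.1, iterEval f k p.2)) '' C)
          = (fun p : A × A => (iterEval f (t * j + k) p.1, iterEval f (t * j + k) p.2)) '' C :=
            (hcomp _ _).symm
        _ = (fun p : A × A => (iterEval f (k + t * j) p.1, iterEval f (k + t * j) p.2)) '' C := by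
            rw [add_comm]
        _ = _ := ih

lemma no_return {K A : Type*} [Field K] [Field A] [Algebra K A]
    (f : K[X]) (α : K) (v : AbsoluteValue K ℝ)
    (hdiv : Filter.Tendsto (fun n : ℕ => v ((polyIter f n).eval α)) Filter.atTop Filter.atTop)
    (x₀ : A) (n₁ m₁ : ℕ) (hx : iterEval f n₁ x₀ = iterEval f m₁ (algebraMap K A α))
    (a b : ℕ) (hab : a < b) (h : iterEval f a x₀ = iterEval f b x₀) : False := by
  set e := b - a with he
  have he1 : 1 ≤ e := by omega
  have heq : ∀ s : ℕ, iterEval f (a + s * e) x₀ = iterEval f a x₀ := by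
    intro s
    induction s with
    | zero => simp
    | succ s ih =>
        have harith : a + (s + 1) * e = e + (a + s * e) := by ring
        rw [harith, iterEval_add, ih, ← iterEval_add]
        have : e + a = b := by omega
        rw [this, ← h]
  have hα : ∀ s : ℕ, iterEval f (a + s * e + m₁) (algebraMap K A α) =
      iterEval f (n₁ + a) x₀ := by
    intro s
    calc iterEval f (a + s * e + m₁) (algebraMap K A α)
        = iterEval f (a + s * e) (iterEval f m₁ (algebraMap K A α)) := iterEval_add f _ _ _
      _ = iterEval f (a + s * e) (iterEval f n₁ x₀) := by rw [hx]
      _ = iterEval f (a + s * e + n₁) x₀ := (iterEval_add f _ _ _).symm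
      _ = iterEval f (n₁ + (a + s * e)) x₀ := by rw [add_comm]
      _ = iterEval f n₁ (iterEval f (a + s * e) x₀) := iterEval_add f _ _ _
      _ = iterEval f n₁ (iterEval f a x₀) := by rw [heq s]
      _ = iterEval f (n₁ + a) x₀ := (iterEval_add f _ _ _).symm
  have hK : ∀ s : ℕ, (polyIter f (a + s * e + m₁)).eval α =
      (polyIter f (a + 0 * e + m₁)).eval α := by
    intro s
    have h2 := (hα s).trans (hα 0).symm
    rw [iterEval, iterEval, aeval_algebraMap_apply_eq_algebraMap_eval,
      aeval_algebraMap_apply_eq_algebraMap_eval] at h2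
    exact (algebraMap K A).injective h2
  set c := v ((polyIter f (a + 0 * e + m₁)).eval α) with hc
  have hev : ∀ᶠ n : ℕ in Filter.atTop, c + 1 ≤ v ((polyIter f n).eval α) :=
    hdiv.eventually_ge_atTop (c + 1)
  obtain ⟨T, hT⟩ := Filter.eventually_atTop.mp hev
  have hTle : T ≤ a + T * e + m₁ := by nlinarith
  have := hT (a + T * e + m₁) hTle
  rw [hK T, ← hc] at this
  linarith

lemma finite_common {F : Type*} [Field F] (q : Polynomial (Polynomial F)) (d : Polynomial F)
    (hd : d ≠ 0) (hfib : ∀ y : F, q.map (evalRingHom y) ≠ 0) :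
    {z : F × F | d.eval z.2 = 0 ∧ (q.map (evalRingHom z.2)).eval z.1 = 0}.Finite := by
  have h1 : {z : F × F | d.eval z.2 = 0 ∧ (q.map (evalRingHom z.2)).eval z.1 = 0} ⊆
      ⋃ y ∈ {y : F | d.IsRoot y},
        (fun x => (x, y)) '' {x : F | (q.map (evalRingHom y)).IsRoot x} := by
    rintro ⟨x, y⟩ ⟨h2, h3⟩
    exact Set.mem_biUnion h2 ⟨x, h3, rfl⟩
  refine Set.Finite.subset (Set.Finite.biUnion (finite_setOf_isRoot hd) ?_) h1
  intro y _
  exact ((finite_setOf_isRoot (hfib y)).image _)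

lemma keyAlg {F : Type*} [Field F] (p q : Polynomial (Polynomial F)) (hp : Irreducible p)
    (hfib : ∀ y : F, q.map (evalRingHom y) ≠ 0)
    (hinf : {z : F × F | (p.map (evalRingHom z.2)).eval z.1 = 0 ∧
      (q.map (evalRingHom z.2)).eval z.1 = 0}.Infinite) : p ∣ q := by
  by_contra hndvd
  letI : NormalizedGCDMonoid (Polynomial F) :=
    Classical.choice (inferInstance : Nonempty _)
  obtain ⟨d, hd0, A, B, hABd⟩ :
      ∃ d : Polynomial F, d ≠ 0 ∧ ∃ A B : Polynomial (Polynomial F),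
        A * p + B * q = Polynomial.C d := by
    rcases Nat.eq_zero_or_pos p.natDegree with h0 | hpos
    · obtain ⟨c, hc⟩ := natDegree_eq_zero.mp h0
      refine ⟨c, ?_, 1, 0, by simp [hc.symm]⟩
      rintro rfl
      exact hp.ne_zero (by simp [← hc])
    · have hprim : p.IsPrimitive := by
        intro r hr
        obtain ⟨t, ht⟩ := hr
        rcases hp.isUnit_or_isUnit ht with h | h
        · exact isUnit_C.mp h
        · exfalso
          obtain ⟨u, hu⟩ := isUnit_iff.mp h
          rw [ht, ← hu.2, ← C_mul, natDegree_C] at hpos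
          exact Nat.lt_irrefl 0 hpos
      set FF := FractionRing (Polynomial F) with hFF
      have hφinj : Function.Injective (mapRingHom (algebraMap (Polynomial F) FF)) :=
        Polynomial.map_injective _ (IsFractionRing.injective _ _)
      have hpirr : Irreducible (p.map (algebraMap (Polynomial F) FF)) :=
        (hprim.irreducible_iff_irreducible_map_fraction_map).mp hp
      set pK := p.map (algebraMap (Polynomial F) FF) with hpK
      set qK := q.map (algebraMap (Polynomial F) FF) with hqK
      have hnd2 : ¬ pK ∣ qK := by
        intro hdvd
        apply hndvd
        by_cases hq0 : q = 0
        · simp [hq0]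
        have hcont0 : q.content ≠ 0 := by
          simpa [content_eq_zero_iff] using hq0
        have hdvd' : pK ∣ (q.primPart.map (algebraMap (Polynomial F) FF)) := by
          have hqfac : qK =
              Polynomial.C (algebraMap (Polynomial F) FF q.content) *
                q.primPart.map (algebraMap (Polynomial F) FF) := by
            rw [hqK]
            conv_lhs => rw [q.eq_C_content_mul_primPart]
            simp [Polynomial.map_mul]
          rw [hqfac] at hdvd
          have hu : IsUnit (Polynomial.C (algebraMap (Polynomial F) FF q.content)) := by
            refine isUnit_C.mpr (isUnit_iff_ne_zero.mpr ?_)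
            simpa using (map_ne_zero_of_mem_nonZeroDivisors (algebraMap (Polynomial F) FF)
              (IsFractionRing.injective _ _) (mem_nonZeroDivisors_of_ne_zero hcont0))
          exact hu.dvd_mul_left.mp hdvd
        have h2 := (hprim.dvd_iff_fraction_map_dvd_fraction_map FF).mpr hdvd'
        exact h2.trans q.primPart_dvd
      have hcop : IsCoprime pK qK := by
        refine isCoprime_of_irreducible_dvd (fun h => hpirr.ne_zero h.1) ?_
        intro z hz hzp hzq
        obtain ⟨w, hw⟩ := hzp
        rcases hpirr.isUnit_or_isUnit hw with h | h
        · exact hz.not_isUnit h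
        · obtain ⟨u, rfl⟩ := h
          apply hnd2
          have hassoc : Associated z pK := ⟨u, hw.symm⟩
          exact hassoc.symm.dvd.trans hzq
      obtain ⟨a, b, hab⟩ := hcop
      obtain ⟨dA, hdA⟩ :=
        IsLocalization.integerNormalization_map_to_map (nonZeroDivisors (Polynomial F)) a
      obtain ⟨dB, hdB⟩ :=
        IsLocalization.integerNormalization_map_to_map (nonZeroDivisors (Polynomial F)) b
      set NA := IsLocalization.integerNormalization (nonZeroDivisors (Polynomial F)) a with hNA
      set NB := IsLocalization.integerNormalization (nonZeroDivisors (Polynomial F)) b with hNB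
      have hdA' : NA.map (algebraMap (Polynomial F) FF) =
          Polynomial.C (algebraMap (Polynomial F) FF (dA : Polynomial F)) * a := by
        rw [hdA, ← algebraMap_smul FF (dA : Polynomial F) a, Polynomial.smul_eq_C_mul]
      have hdB' : NB.map (algebraMap (Polynomial F) FF) =
          Polynomial.C (algebraMap (Polynomial F) FF (dB : Polynomial F)) * b := by
        rw [hdB, ← algebraMap_smul FF (dB : Polynomial F) b, Polynomial.smul_eq_C_mul]
      refine ⟨(dA : Polynomial F) * (dB : Polynomial F),
        mul_ne_zero (nonZeroDivisors.ne_zero dA.2) (nonZeroDivisors.ne_zero dB.2),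
        Polynomial.C (dB : Polynomial F) * NA, Polynomial.C (dA : Polynomial F) * NB,
        hφinj ?_⟩
      rw [coe_mapRingHom]
      rw [Polynomial.map_add, Polynomial.map_mul, Polynomial.map_mul,
        Polynomial.map_mul, Polynomial.map_mul, hdA', hdB', Polynomial.map_C,
        Polynomial.map_C, Polynomial.map_C, map_mul]
      rw [Polynomial.C_mul]
      linear_combination (Polynomial.C (algebraMap (Polynomial F) FF (dA : Polynomial F)) *
        Polynomial.C (algebraMap (Polynomial F) FF (dB : Polynomial F))) * hab
  refine (Set.not_infinite.mpr (finite_common q d hd0 hfib)) (hinf.mono ?_)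
  rintro ⟨x, y⟩ ⟨h2, h3⟩
  refine ⟨?_, h3⟩
  have := congrArg (fun r => ((r.map (evalRingHom y)).eval x)) hABd
  simpa [h2, h3] using this.symm

noncomputable def phi2 (F : Type*) [CommSemiring F] :
    MvPolynomial (Fin 2) F ≃+* Polynomial (Polynomial F) :=
  (MvPolynomial.finSuccEquiv F 1).toRingEquiv.trans
    (Polynomial.mapEquiv
      ((MvPolynomial.finSuccEquiv F 0).toRingEquiv.trans
        (Polynomial.mapEquiv (MvPolynomial.isEmptyRingEquiv F (Fin 0)))))

lemma phi2_C {F : Type*} [CommSemiring F] (a : F) :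
    phi2 F (MvPolynomial.C a) = Polynomial.C (Polynomial.C a) := by
  simp [phi2, MvPolynomial.finSuccEquiv_apply, MvPolynomial.eval₂Hom_C, Polynomial.mapEquiv,
    MvPolynomial.isEmptyRingEquiv, MvPolynomial.coeff_zero_C]
  exact MvPolynomial.coeff_zero_C a

lemma phi2_X0 {F : Type*} [CommSemiring F] :
    phi2 F (MvPolynomial.X 0) = (Polynomial.X : Polynomial (Polynomial F)) := by
  simp [phi2, MvPolynomial.finSuccEquiv_X_zero, Polynomial.mapEquiv]

lemma phi2_X1 {F : Type*} [CommSemiring F] :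
    phi2 F (MvPolynomial.X 1) = Polynomial.C (Polynomial.X : Polynomial F) := by
  have h : (MvPolynomial.X 1 : MvPolynomial (Fin 2) F) = MvPolynomial.X (Fin.succ 0) := rfl
  rw [phi2, RingEquiv.trans_apply]
  have h2 : (MvPolynomial.finSuccEquiv F 1).toRingEquiv (MvPolynomial.X 1) =
      Polynomial.C (MvPolynomial.X 0) := by
    rw [h]; exact MvPolynomial.finSuccEquiv_X_succ
  rw [h2]
  simp [Polynomial.mapEquiv, MvPolynomial.finSuccEquiv_X_zero]

lemma eval_phi2 {F : Type*} [CommSemiring F] (Q : MvPolynomial (Fin 2) F) (x y : F) :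
    ((phi2 F Q).map (evalRingHom y)).eval x = MvPolynomial.eval ![x, y] Q := by
  have h : (evalRingHom x).comp ((mapRingHom (evalRingHom y)).comp
      (phi2 F : MvPolynomial (Fin 2) F →+* Polynomial (Polynomial F))) =
      MvPolynomial.eval ![x, y] := by
    apply MvPolynomial.ringHom_ext
    · intro a
      simp [phi2_C]
    · intro i
      fin_cases i
      · simp [phi2_X0]
      · simp [phi2_X1]
  exact RingHom.congr_fun h Q

theorem stmt17
    (K : IntermediateField ℚ (AlgebraicClosure ℚ)) [FiniteDimensional ℚ K]
    (f : Polynomial K) (hmonic : f.Monic) (hdeg : 2 ≤ f.natDegree)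
    (hexc : ¬ IsExceptional f)
    (α : K)
    -- a finite place of `K`: a nontrivial non-archimedean absolute value
    (v : AbsoluteValue K ℝ)
    (hna : IsNonarchimedean (fun x : K => v x))
    (hnontriv : ∃ x : K, x ≠ 0 ∧ v x ≠ 1)
    -- good reduction for `f` at `v`
    (hgood : ∀ i < f.natDegree, v (f.coeff i / f.leadingCoeff) ≤ 1)
    -- `v` co-prime to `d`
    (hcop : v ((f.natDegree : K)) = 1)
    -- `|f^∘n(α)|_v → ∞`
    (hdiv : Filter.Tendsto (fun n : ℕ => v ((polyIter f n).eval α)) Filter.atTop Filter.atTop)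
    (P : MvPolynomial (Fin 2) K)
    (hP : Irreducible (MvPolynomial.map (algebraMap K (AlgebraicClosure ℚ)) P))
    -- `C` is pre-periodic under the coordinatewise action of `(f, f)`
    (hpre : ∃ (k j : ℕ), 1 ≤ j ∧
      (fun p : AlgebraicClosure ℚ × AlgebraicClosure ℚ =>
          (iterEval f (k + j) p.1, iterEval f (k + j) p.2)) ''
        {p | MvPolynomial.eval ![p.1, p.2]
            (MvPolynomial.map (algebraMap K (AlgebraicClosure ℚ)) P) = 0} =
      (fun p : AlgebraicClosure ℚ × AlgebraicClosure ℚ =>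
          (iterEval f k p.1, iterEval f k p.2)) ''
        {p | MvPolynomial.eval ![p.1, p.2]
            (MvPolynomial.map (algebraMap K (AlgebraicClosure ℚ)) P) = 0})
    -- `C` contains a point with both coordinates in the grand orbit of `α`
    (hpt : ∃ p : AlgebraicClosure ℚ × AlgebraicClosure ℚ,
      MvPolynomial.eval ![p.1, p.2]
          (MvPolynomial.map (algebraMap K (AlgebraicClosure ℚ)) P) = 0 ∧
      p.1 ∈ grandOrbit f (algebraMap K (AlgebraicClosure ℚ) α) ∧
      p.2 ∈ grandOrbit f (algebraMap K (AlgebraicClosure ℚ) α)) :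
    ∃ n m : ℕ, ∀ x y : AlgebraicClosure ℚ,
      MvPolynomial.eval ![x, y]
          (MvPolynomial.map (algebraMap K (AlgebraicClosure ℚ)) P) = 0 →
      iterEval f n x = iterEval f m y := by
  classical
  obtain ⟨k, j, hj, him⟩ := hpre
  obtain ⟨p₀, hp₀C, ⟨n₁, m₁, hx1⟩, ⟨n₂, m₂, hy1⟩⟩ := hpt
  set P' := MvPolynomial.map (algebraMap K (AlgebraicClosure ℚ)) P with hP'def
  set Cs := {p : AlgebraicClosure ℚ × AlgebraicClosure ℚ | MvPolynomial.eval ![p.1, p.2] P' = 0} with hCs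
  set αA := algebraMap K (AlgebraicClosure ℚ) α with hαA
  set N := m₂ + n₁ with hN
  set M := m₁ + n₂ with hM
  have hNM : iterEval f N p₀.1 = iterEval f M p₀.2 := by
    calc iterEval f (m₂ + n₁) p₀.1
        = iterEval f m₂ (iterEval f n₁ p₀.1) := iterEval_add f _ _ _
      _ = iterEval f m₂ (iterEval f m₁ αA) := by rw [hx1]
      _ = iterEval f (m₂ + m₁) αA := (iterEval_add f _ _ _).symm
      _ = iterEval f (m₁ + m₂) αA := by rw [add_comm]
      _ = iterEval f m₁ (iterEval f m₂ αA) := iterEval_add f _ _ _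
      _ = iterEval f m₁ (iterEval f n₂ p₀.2) := by rw [hy1]
      _ = iterEval f (m₁ + n₂) p₀.2 := (iterEval_add f _ _ _).symm
  -- find, for every t, a point of the curve mapping onto the (k+t*j)-th iterate of p₀
  have hmem : ∀ t : ℕ, (iterEval f (k + t * j) p₀.1, iterEval f (k + t * j) p₀.2) ∈
      (fun p : AlgebraicClosure ℚ × AlgebraicClosure ℚ => (iterEval f k p.1, iterEval f k p.2)) '' Cs := by
    intro t
    rw [← image_pair_iter f Cs k j him t]
    exact Set.mem_image_of_mem _ hp₀C
  choose w hwC hwEq using hmem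
  have hfirst : ∀ t, iterEval f k (w t).1 = iterEval f (k + t * j) p₀.1 :=
    fun t => congrArg Prod.fst (hwEq t)
  have hsecond : ∀ t, iterEval f k (w t).2 = iterEval f (k + t * j) p₀.2 :=
    fun t => congrArg Prod.snd (hwEq t)
  -- the infinite set of common zeros
  set Z := {z : AlgebraicClosure ℚ × AlgebraicClosure ℚ | MvPolynomial.eval ![z.1, z.2] P' = 0 ∧
    iterEval f (N + k) z.1 = iterEval f (M + k) z.2} with hZ
  have hZmem : ∀ t, w t ∈ Z := by
    intro t
    refine ⟨hwC t, ?_⟩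
    calc iterEval f (N + k) (w t).1
        = iterEval f N (iterEval f k (w t).1) := iterEval_add f _ _ _
      _ = iterEval f N (iterEval f (k + t * j) p₀.1) := by rw [hfirst t]
      _ = iterEval f (N + (k + t * j)) p₀.1 := (iterEval_add f _ _ _).symm
      _ = iterEval f ((k + t * j) + N) p₀.1 := by rw [add_comm]
      _ = iterEval f (k + t * j) (iterEval f N p₀.1) := iterEval_add f _ _ _
      _ = iterEval f (k + t * j) (iterEval f M p₀.2) := by rw [hNM]
      _ = iterEval f ((k + t * j) + M) p₀.2 := (iterEval_add f _ _ _).symm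
      _ = iterEval f (M + (k + t * j)) p₀.2 := by rw [add_comm]
      _ = iterEval f M (iterEval f (k + t * j) p₀.2) := iterEval_add f _ _ _
      _ = iterEval f M (iterEval f k (w t).2) := by rw [hsecond t]
      _ = iterEval f (M + k) (w t).2 := (iterEval_add f _ _ _).symm
  have hinj : Function.Injective w := by
    have key : ∀ s₁ s₂ : ℕ, s₁ < s₂ → w s₁ = w s₂ → False := by
      intro s₁ s₂ hlt hw
      have hlt2 : k + s₁ * j < k + s₂ * j := by
        have h9 : s₁ * j < s₂ * j := by
          exact Nat.mul_lt_mul_of_lt_of_le hlt (le_refl j) (by omega)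
        omega
      refine no_return f α v hdiv p₀.1 n₁ m₁ hx1 (k + s₁ * j) (k + s₂ * j) hlt2 ?_
      rw [← hfirst s₁, ← hfirst s₂, hw]
    intro t₁ t₂ hteq
    by_contra hne
    rcases Nat.lt_or_ge t₁ t₂ with h | h
    · exact key t₁ t₂ h hteq
    · exact key t₂ t₁ (by omega) hteq.symm
  have hZinf : Z.Infinite := Set.infinite_of_injective_forall_mem hinj hZmem
  -- bivariate polynomial corresponding to the relation f^(N+k)(x) = f^(M+k)(y)
  set g' := (polyIter f (N + k)).map (algebraMap K (AlgebraicClosure ℚ)) with hg'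
  set h' := (polyIter f (M + k)).map (algebraMap K (AlgebraicClosure ℚ)) with hh'
  set q : Polynomial (Polynomial (AlgebraicClosure ℚ)) := g'.map Polynomial.C - Polynomial.C h' with hq
  have hqmap : ∀ y : AlgebraicClosure ℚ, q.map (evalRingHom y) = g' - Polynomial.C (h'.eval y) := by
    intro y
    rw [hq, Polynomial.map_sub, Polynomial.map_map, Polynomial.map_C]
    have hcomp : (evalRingHom y).comp (Polynomial.C : AlgebraicClosure ℚ →+* Polynomial (AlgebraicClosure ℚ)) = RingHom.id (AlgebraicClosure ℚ) := by
      ext a; simp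
    rw [hcomp, Polynomial.map_id]
    rfl
  have hiter_eval : ∀ (t : ℕ) (x : AlgebraicClosure ℚ), ((polyIter f t).map (algebraMap K (AlgebraicClosure ℚ))).eval x = iterEval f t x := by
    intro t x
    rw [eval_map, iterEval, aeval_def]
  have hg'deg : 1 ≤ g'.natDegree := by
    rw [hg', (polyIter_monic hmonic (by omega) (N + k)).natDegree_map,
      polyIter_natDegree]
    exact Nat.one_le_pow _ _ (by omega)
  have hfib : ∀ y : AlgebraicClosure ℚ, q.map (evalRingHom y) ≠ 0 := by
    intro y h0
    rw [hqmap y, sub_eq_zero] at h0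
    rw [h0, natDegree_C] at hg'deg
    omega
  have hq_evals : ∀ x y : AlgebraicClosure ℚ, (q.map (evalRingHom y)).eval x =
      iterEval f (N + k) x - iterEval f (M + k) y := by
    intro x y
    rw [hqmap y, eval_sub, eval_C, hiter_eval, hiter_eval]
  have hpirr : Irreducible (phi2 (AlgebraicClosure ℚ) P') := (MulEquiv.irreducible_iff (phi2 (AlgebraicClosure ℚ))).mpr hP
  have hdvd : phi2 (AlgebraicClosure ℚ) P' ∣ q := by
    refine keyAlg (phi2 (AlgebraicClosure ℚ) P') q hpirr hfib (hZinf.mono ?_)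
    rintro ⟨x, y⟩ ⟨hz1, hz2⟩
    refine ⟨?_, ?_⟩
    · rw [eval_phi2]; exact hz1
    · rw [hq_evals, sub_eq_zero]; exact hz2
  refine ⟨N + k, M + k, ?_⟩
  intro x y hxy
  obtain ⟨r, hr⟩ := hdvd
  have h1 : (q.map (evalRingHom y)).eval x = 0 := by
    rw [hr, Polynomial.map_mul, eval_mul]
    have h2 : ((phi2 (AlgebraicClosure ℚ) P').map (evalRingHom y)).eval x = 0 := by
      rw [eval_phi2]; exact hxy
    rw [h2, zero_mul]
  rw [hq_evals, sub_eq_zero] at h1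
  exact h1
end
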